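/- arXiv:1804.02531 — 5 statements merged into one kernel-verified Lean document; each statement's English description precedes it below -/
import Mathlib

section
/- For every fixed integer n ≥ 2, the sequence (ξ_{n,m})_{m ≥ 1} converges to 0 as m → ∞. -/
open Finset Filter Topology

/-- A code `(v 0, …, v (m-1))` is *uniquely decodable* if any two nonempty sequences of
indices whose corresponding concatenations of code words coincide are equal. -/
def IsUDCode {X : Type*} {m : ℕ} (v : Fin m → List X) : Prop :=
  ∀ s t : List (Fin m), s ≠ [] → t ≠ [] →
    (s.map v).flatten = (t.map v).flatten → s = t

/-- A *prefix code*: an injective sequence of nonempty words where no code word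
is a prefix of another. -/
def IsPrefixCode {X : Type*} {m : ℕ} (v : Fin m → List X) : Prop :=
  Function.Injective v ∧ (∀ i, v i ≠ []) ∧ ∀ i j, i ≠ j → ¬ v i <+: v j

/-- The set of uniquely decodable codes over an `n`-letter alphabet with
length distribution `L`. -/
def UD (n : ℕ) {m : ℕ} (L : Fin m → ℕ) : Set (Fin m → List (Fin n)) :=
  {v | (∀ i, (v i).length = L i) ∧ IsUDCode v}

/-- The set of prefix codes over an `n`-letter alphabet with length distribution `L`. -/
def PR (n : ℕ) {m : ℕ} (L : Fin m → ℕ) : Set (Fin m → List (Fin n)) :=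
  {v | (∀ i, (v i).length = L i) ∧ IsPrefixCode v}

/-- `ρ_{n,L} = |PR_n(L)| / |UD_n(L)|`. -/
noncomputable def rho (n : ℕ) {m : ℕ} (L : Fin m → ℕ) : ℝ :=
  ((PR n L).ncard : ℝ) / ((UD n L).ncard : ℝ)

/-- `ξ_{n,m} = inf_{L ∈ ℒ_{n,m}} ρ_{n,L}`. -/
noncomputable def xi (n m : ℕ) : ℝ :=
  sInf {r : ℝ | ∃ L : Fin m → ℕ, (∀ i, 1 ≤ L i) ∧ (UD n L).Nonempty ∧ r = rho n L}

/-- `ς_{n,m} = (n - (m mod (n-1))) / n^{⌊m/(n-1)⌋ + 1}`. -/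
noncomputable def varsigma (n m : ℕ) : ℝ :=
  ((n : ℝ) - (m % (n - 1) : ℕ)) / (n : ℝ) ^ (m / (n - 1) + 1)

/-- `q_{n,m}`: `1` if `n ≥ m`, and `(m-1)!/(m-1)^{m-1}` if `n < m`. -/
noncomputable def qnm (n m : ℕ) : ℝ :=
  if m ≤ n then 1 else (Nat.factorial (m - 1) : ℝ) / ((m - 1 : ℕ) : ℝ) ^ (m - 1)

/-- `ϖ_{n,m} = ∏_{i=1}^{m-1} (1 - (1 - n^{-i})/(n-1))`. -/
noncomputable def varpi (n m : ℕ) : ℝ :=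
  ∏ i ∈ Finset.Icc 1 (m - 1), (1 - (1 - 1 / (n : ℝ) ^ i) / ((n : ℝ) - 1))

/-- `η_{n,m} = 1 + Σ_{i=1}^{m-1} C(m-1,i)/(n^i - 1)`. -/
noncomputable def eta (n m : ℕ) : ℝ :=
  1 + ∑ i ∈ Finset.Icc 1 (m - 1), ((m - 1).choose i : ℝ) / ((n : ℝ) ^ i - 1)

namespace Proof8

/-- Finset of words of length `k` over `Fin n`. -/
def WordF (n k : ℕ) : Finset (List (Fin n)) :=
  (Finset.univ : Finset (Fin k → Fin n)).image List.ofFn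

lemma mem_WordF {n k : ℕ} {w : List (Fin n)} : w ∈ WordF n k ↔ w.length = k := by
  constructor
  · rintro hw
    simp only [WordF, Finset.mem_image] at hw
    obtain ⟨f, -, rfl⟩ := hw
    simp
  · intro hw
    simp only [WordF, Finset.mem_image]
    refine ⟨fun i => w.get (Fin.cast hw.symm i), Finset.mem_univ _, ?_⟩
    subst hw
    simp [List.ofFn_get]

lemma card_WordF (n k : ℕ) : (WordF n k).card = n ^ k := by
  rw [WordF, Finset.card_image_of_injective _ List.ofFn_injective]
  simp

/-- Key sufficiency lemma for unique decodability. -/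
lemma key_ud {n m k : ℕ} [NeZero m] (x y : Fin n) (hxy : x ≠ y) (hk : 2 ≤ k)
    (v : Fin m → List (Fin n))
    (h0 : v 0 = [x])
    (hlen : ∀ i, i ≠ 0 → (v i).length = k)
    (hG : ∀ i, i ≠ 0 → (v i).take 1 ≠ [x] ∨ (v i).take 2 = [x, y])
    (hinj : ∀ i j, i ≠ 0 → j ≠ 0 → v i = v j → i = j)
    (hC : ∀ i j, i ≠ 0 → j ≠ 0 → (v i).take 1 = [x] →
      (v i).drop 1 ≠ (v j).take (k - 1)) :
    IsUDCode v := by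
  have hne : ∀ i, v i ≠ [] := by
    intro i
    by_cases hi : i = 0
    · subst hi; rw [h0]; simp
    · intro h
      have := hlen i hi
      rw [h] at this
      simp at this
      omega
  -- helper: mixed case is impossible
  have helper : ∀ (j : Fin m), j ≠ 0 → ∀ (s' : List (Fin m)) (F2 : List (Fin n)),
      x :: (s'.map v).flatten = v j ++ F2 → False := by
    intro j hj s' F2 hE
    have lenj : (v j).length = k := hlen j hj
    have h1 : (v j).take 1 = [x] := by
      have := congrArg (List.take 1) hE
      rw [List.take_append_of_le_length (by omega)] at this
      simpa using this.symm
    have h2 : (v j).take 2 = [x, y] := by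
      rcases hG j hj with h | h
      · exact absurd h1 h
      · exact h
    have hE' : (s'.map v).flatten = (v j).drop 1 ++ F2 := by
      have := congrArg (List.drop 1) hE
      rw [List.drop_append_of_le_length (by omega)] at this
      simpa using this
    have hdlen : ((v j).drop 1).length = k - 1 := by simp [lenj]
    have hdstart : ((v j).drop 1).take 1 = [y] := by
      have : ((v j).take 2).drop 1 = ((v j).drop 1).take 1 := by
        rw [List.drop_take]
      rw [h2] at this
      simpa using this.symm
    cases s' with
    | nil =>
      simp only [List.map_nil, List.flatten_nil] at hE'
      have : ((v j).drop 1 ++ F2).length = 0 := by rw [← hE']; simp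
      simp [hdlen] at this
      omega
    | cons i' s'' =>
      simp only [List.map_cons, List.flatten_cons] at hE'
      by_cases hi' : i' = 0
      · subst hi'
        rw [h0] at hE'
        -- hE' : [x] ++ F3 = (v j).drop 1 ++ F2, compare first letters
        have := congrArg (List.take 1) hE'
        rw [List.take_append_of_le_length (by simp),
          List.take_append_of_le_length (by omega)] at this
        rw [hdstart] at this
        simp at this
        exact hxy this
      · apply hC j i' hj hi' h1
        have := congrArg (List.take (k - 1)) hE'.symm
        rw [List.take_append_of_le_length (by omega),
          List.take_append_of_le_length (by rw [hlen i' hi']; omega)] at this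
        rw [List.take_of_length_le (by omega)] at this
        exact this
  have main : ∀ s t : List (Fin m), (s.map v).flatten = (t.map v).flatten → s = t := by
    intro s
    induction s with
    | nil =>
      intro t ht
      cases t with
      | nil => rfl
      | cons j t' =>
        exfalso
        simp only [List.map_nil, List.flatten_nil, List.map_cons, List.flatten_cons] at ht
        have := List.append_eq_nil_iff.mp ht.symm
        exact hne j this.1
    | cons i s' ih =>
      intro t ht
      cases t with
      | nil =>
        exfalso
        simp only [List.map_nil, List.flatten_nil, List.map_cons, List.flatten_cons] at ht
        have := List.append_eq_nil_iff.mp ht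
        exact hne i this.1
      | cons j t' =>
        simp only [List.map_cons, List.flatten_cons] at ht
        by_cases hi : i = 0 <;> by_cases hj : j = 0
        · subst hi; subst hj
          rw [h0] at ht
          simp only [List.cons_append, List.nil_append, List.cons.injEq] at ht
          rw [ih t' ht.2]
        · exfalso
          subst hi
          rw [h0] at ht
          exact helper j hj s' _ (by simpa using ht)
        · exfalso
          subst hj
          rw [h0] at ht
          exact helper i hi t' _ (by simpa using ht.symm)
        · have hlen' : (v i).length = (v j).length := by
            rw [hlen i hi, hlen j hj]
          obtain ⟨h1, h2⟩ := List.append_inj ht hlen'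
          have : i = j := hinj i j hi hj h1
          subst this
          rw [ih t' h2]
  intro s t _ _ h
  exact main s t h

end Proof8
namespace Proof8

lemma prod_ite_one_card {m : ℕ} (p : Fin m → Prop) [DecidablePred p] (g : ℕ) :
    (∏ l : Fin m, if p l then 1 else g) =
      g ^ (Finset.univ.filter (fun l => ¬ p l)).card := by
  rw [← Finset.prod_filter_mul_prod_filter_not Finset.univ p (fun l => if p l then 1 else g)]
  have h1 : (∏ l ∈ Finset.univ.filter p, if p l then 1 else g) = 1 :=
    Finset.prod_eq_one (fun l hl => if_pos (Finset.mem_filter.mp hl).2)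
  have h2 : (∏ l ∈ Finset.univ.filter (fun l => ¬ p l), if p l then 1 else g)
      = g ^ (Finset.univ.filter (fun l => ¬ p l)).card := by
    rw [Finset.prod_congr rfl (fun l hl => if_neg (Finset.mem_filter.mp hl).2),
      Finset.prod_const]
  rw [h1, h2, one_mul]

lemma card_take_one {n k : ℕ} (hk : 1 ≤ k) (c : Fin n) :
    ((WordF n k).filter (fun w => w.take 1 = [c])).card = n ^ (k - 1) := by
  have himg : (WordF n k).filter (fun w => w.take 1 = [c])
      = (WordF n (k-1)).image (fun u => c :: u) := by
    ext w
    simp only [Finset.mem_filter, Finset.mem_image, mem_WordF]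
    constructor
    · rintro ⟨hlen, htake⟩
      refine ⟨w.drop 1, by simp [hlen], ?_⟩
      have := List.take_append_drop 1 w
      rw [htake] at this
      simpa using this
    · rintro ⟨u, hu, rfl⟩
      constructor
      · simp; omega
      · simp
  rw [himg, Finset.card_image_of_injective _ (List.cons_injective), card_WordF]

lemma card_not_take_one {n k : ℕ} (hk : 1 ≤ k) (c : Fin n) :
    ((WordF n k).filter (fun w => ¬ w.take 1 = [c])).card = n ^ k - n ^ (k - 1) := by
  have := Finset.card_filter_add_card_filter_not
    (s := WordF n k) (p := fun w => w.take 1 = [c])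
  rw [card_take_one hk c, card_WordF] at this
  omega

lemma card_take_two {n k : ℕ} (hk : 2 ≤ k) (c d : Fin n) :
    ((WordF n k).filter (fun w => w.take 2 = [c, d])).card = n ^ (k - 2) := by
  have himg : (WordF n k).filter (fun w => w.take 2 = [c, d])
      = (WordF n (k-2)).image (fun u => c :: d :: u) := by
    ext w
    simp only [Finset.mem_filter, Finset.mem_image, mem_WordF]
    constructor
    · rintro ⟨hlen, htake⟩
      refine ⟨w.drop 2, by simp [hlen], ?_⟩
      have := List.take_append_drop 2 w
      rw [htake] at this
      simpa using this
    · rintro ⟨u, hu, rfl⟩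
      constructor
      · simp; omega
      · simp [List.take_cons]
  rw [himg, Finset.card_image_of_injective, card_WordF]
  intro u u' h
  simpa using h

lemma eq_take_concat {α : Type*} (d : α) (k : ℕ) (w : List α) (hk : 1 ≤ k)
    (hw : w.length = k) : w = w.take (k-1) ++ [w.getLastD d] := by
  obtain ⟨a, ha⟩ : ∃ a, w.drop (k-1) = [a] := by
    rw [← List.length_eq_one_iff]
    simp [hw]; omega
  have hsplit := List.take_append_drop (k-1) w
  rw [ha] at hsplit
  have : w.getLastD d = a := by
    conv_lhs => rw [← hsplit]
    exact List.getLastD_concat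
  rw [this, hsplit]

lemma nat_sq_le_two_pow {m : ℕ} (hm : 4 ≤ m) : m ^ 2 ≤ 2 ^ m := by
  induction m with
  | zero => omega
  | succ m ih =>
    rcases Nat.lt_or_ge m 4 with h | h
    · interval_cases m <;> simp_all <;> omega
    · have h1 := ih h
      have h2 : (m+1)^2 ≤ 2 * m^2 := by nlinarith
      calc (m+1)^2 ≤ 2 * m^2 := h2
        _ ≤ 2 * 2^m := by omega
        _ = 2^(m+1) := by ring

end Proof8
namespace Proof8

lemma main_bound (n M : ℕ) (hn : 2 ≤ n) (hM : 12 ≤ M) :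
    ∃ L : Fin (M+1) → ℕ, (∀ i, 1 ≤ L i) ∧ (UD n L).Nonempty ∧
      rho n L ≤ 2 * n * (((n:ℝ)^2 - n) / ((n:ℝ)^2 - n + 1)) ^ M := by
  haveI : NeZero n := ⟨by omega⟩
  set x : Fin n := ⟨0, by omega⟩ with hxdef
  set y : Fin n := ⟨1, by omega⟩ with hydef
  have hxy : x ≠ y := by
    intro h
    have h' : x.val = y.val := congrArg Fin.val h
    rw [hxdef, hydef] at h'
    simp at h'
  set k : ℕ := M + n + 4 with hkdef
  have hk2 : 2 ≤ k := by omega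
  set L : Fin (M+1) → ℕ := fun i => if i = 0 then 1 else k with hLdef
  have hL1 : ∀ i, 1 ≤ L i := by
    intro i
    by_cases h : i = 0
    · simp [hLdef, h]
    · simp only [hLdef, h, if_false]
      omega
  -- basic word sets
  set G : Finset (List (Fin n)) :=
    (WordF n k).filter (fun w => ¬ w.take 1 = [x] ∨ w.take 2 = [x, y]) with hGdef
  set a : ℕ := n ^ k - n ^ (k-1) with hadef
  set b : ℕ := n ^ (k-2) with hbdef
  set g : ℕ := a + b with hgdef
  have hGcard : G.card = g := by
    rw [hGdef, Finset.filter_or, Finset.card_union_of_disjoint, card_not_take_one (by omega) x,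
      card_take_two hk2 x y]
    rw [Finset.disjoint_left]
    intro w hw1 hw2
    simp only [Finset.mem_filter] at hw1 hw2
    apply hw1.2
    have h12 : List.take 1 (List.take 2 w) = List.take 1 w := by
      rw [List.take_take]
      norm_num
    rw [← h12, hw2.2]
    rfl
  -- the piFinset product sets
  set S' : Fin (M+1) → Finset (List (Fin n)) :=
    fun l => if l = 0 then {[x]} else G with hS'def
  set T : Finset (Fin (M+1) → List (Fin n)) := Fintype.piFinset S' with hTdef
  have hTcard : T.card = g ^ M := by
    rw [hTdef, Fintype.card_piFinset]
    have : ∀ l : Fin (M+1), (S' l).card = if l = 0 then 1 else g := by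
      intro l
      by_cases h : l = 0
      · simp [hS'def, h]
      · simp [hS'def, h, hGcard]
    rw [Finset.prod_congr rfl (fun l _ => this l), prod_ite_one_card]
    congr 1
    have : (Finset.univ.filter (fun l : Fin (M+1) => ¬ l = 0))
        = Finset.univ.erase 0 := by
      rw [← Finset.filter_ne']
    rw [this, Finset.card_erase_of_mem (Finset.mem_univ _), Finset.card_univ,
      Fintype.card_fin]
    omega
  -- the good subfamily H
  set H : Finset (Fin (M+1) → List (Fin n)) := T.filter
    (fun v => (∀ i j : Fin (M+1), i ≠ 0 → j ≠ 0 → i ≠ j → v i ≠ v j) ∧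
      (∀ i j : Fin (M+1), i ≠ 0 → j ≠ 0 → (v i).take 1 = [x] →
        (v i).drop 1 ≠ (v j).take (k-1))) with hHdef
  -- membership facts for T
  have hTmem : ∀ v ∈ T, v 0 = [x] ∧ ∀ l : Fin (M+1), l ≠ 0 → v l ∈ G := by
    intro v hv
    rw [hTdef, Fintype.mem_piFinset] at hv
    constructor
    · have := hv 0
      simpa [hS'def] using this
    · intro l hl
      have := hv l
      simpa [hS'def, hl] using this
  have hGlen : ∀ w ∈ G, w.length = k := by
    intro w hw
    rw [hGdef, Finset.mem_filter, mem_WordF] at hw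
    exact hw.1
  -- H consists of UD codes
  have hHsub : ↑H ⊆ UD n L := by
    intro v hv
    rw [Finset.mem_coe, hHdef, Finset.mem_filter] at hv
    obtain ⟨hvT, hinj', hC'⟩ := hv
    obtain ⟨hv0, hvG⟩ := hTmem v hvT
    have hvlen : ∀ i, i ≠ 0 → (v i).length = k := fun i hi => hGlen _ (hvG i hi)
    constructor
    · intro i
      by_cases h : i = 0
      · subst h; rw [hv0]; simp [hLdef]
      · rw [hvlen i h]; simp [hLdef, h]
    · refine key_ud x y hxy hk2 v hv0 hvlen ?_ ?_ hC'
      · intro i hi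
        have := hvG i hi
        rw [hGdef, Finset.mem_filter] at this
        exact this.2
      · intro i j hi hj hij
        by_contra hne
        exact hinj' i j hi hj hne hij
  -- bad pairs covering
  set pairs : Finset (Fin (M+1) × Fin (M+1)) :=
    (Finset.univ ×ˢ Finset.univ).filter
      (fun p => p.1 ≠ 0 ∧ p.2 ≠ 0 ∧ p.1 ≠ p.2) with hpairsdef
  set Bad : Fin (M+1) × Fin (M+1) → Finset (Fin (M+1) → List (Fin n)) :=
    fun p => T.filter (fun v => v p.1 = v p.2 ∨
      ((v p.1).take 1 = [x] ∧ (v p.1).drop 1 = (v p.2).take (k-1))) with hBaddef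
  have hcover : T ⊆ H ∪ pairs.biUnion Bad := by
    intro v hvT
    by_cases hvH : v ∈ H
    · exact Finset.mem_union_left _ hvH
    · apply Finset.mem_union_right
      rw [Finset.mem_biUnion]
      have hnot : ¬ ((∀ i j : Fin (M+1), i ≠ 0 → j ≠ 0 → i ≠ j → v i ≠ v j) ∧
          (∀ i j : Fin (M+1), i ≠ 0 → j ≠ 0 → (v i).take 1 = [x] →
            (v i).drop 1 ≠ (v j).take (k-1))) := by
        intro h
        exact hvH (by rw [hHdef, Finset.mem_filter]; exact ⟨hvT, h⟩)
      rcases not_and_or.mp hnot with h1 | h2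
      · push_neg at h1
        obtain ⟨i, j, hi, hj, hij, heq⟩ := h1
        refine ⟨(i,j), ?_, ?_⟩
        · rw [hpairsdef, Finset.mem_filter]
          exact ⟨by simp, hi, hj, hij⟩
        · rw [hBaddef, Finset.mem_filter]
          exact ⟨hvT, Or.inl heq⟩
      · push_neg at h2
        obtain ⟨i, j, hi, hj, htake, hdrop⟩ := h2
        have hij : i ≠ j := by
          rintro rfl
          have hiG := (hTmem v hvT).2 i hi
          rw [hGdef, Finset.mem_filter] at hiG
          have htake2 : (v i).take 2 = [x, y] := by
            rcases hiG.2 with h | h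
            · exact absurd htake h
            · exact h
          have hlen : (v i).length = k := hGlen _ ((hTmem v hvT).2 i hi)
          have hL : ((v i).drop 1).take 1 = [y] := by
            have h' : ((v i).take 2).drop 1 = ((v i).drop 1).take 1 := by
              rw [List.drop_take]
            rw [htake2] at h'
            simpa using h'.symm
          have hR : (((v i).take (k-1)).take 1) = [x] := by
            rw [List.take_take]
            have : (1 : ℕ) ⊓ (k-1) = 1 := by omega
            rw [this, htake]
          rw [hdrop] at hL
          rw [hL] at hR
          have : y = x := by injection hR
          exact hxy this.symm
        refine ⟨(i,j), ?_, ?_⟩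
        · rw [hpairsdef, Finset.mem_filter]
          exact ⟨by simp, hi, hj, hij⟩
        · rw [hBaddef, Finset.mem_filter]
          exact ⟨hvT, Or.inr ⟨htake, hdrop⟩⟩
  -- card of each Bad
  have hBadcard : ∀ p ∈ pairs, (Bad p).card ≤ (n+1) * g ^ (M-1) := by
    rintro ⟨i, j⟩ hp
    rw [hpairsdef, Finset.mem_filter] at hp
    obtain ⟨-, hi, hj, hij⟩ := hp
    set S'' : Fin (M+1) → Finset (List (Fin n)) :=
      fun l => if l = j then {[x]} else S' l with hS''def
    have hcodcard : (Fintype.piFinset S'').card = g ^ (M-1) := by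
      rw [Fintype.card_piFinset]
      have hc : ∀ l : Fin (M+1), (S'' l).card = if (l = j ∨ l = 0) then 1 else g := by
        intro l
        by_cases h1 : l = j
        · simp [hS''def, h1]
        · by_cases h0 : l = 0
          · simp [hS''def, hS'def, h1, h0]
          · simp [hS''def, hS'def, h1, h0, hGcard]
      rw [Finset.prod_congr rfl (fun l _ => hc l), prod_ite_one_card]
      congr 1
      rw [Finset.filter_not, Finset.card_sdiff_of_subset (Finset.filter_subset _ _),
        Finset.filter_or, Finset.filter_eq', Finset.filter_eq']
      simp only [Finset.mem_univ, if_true]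
      rw [Finset.card_union_of_disjoint (Finset.disjoint_singleton.mpr hj)]
      simp only [Finset.card_singleton, Finset.card_univ, Fintype.card_fin]
      omega
    have hjG : ∀ v ∈ Bad (i, j), (v j).length = k ∧ v j ∈ G ∧ v ∈ T := by
      intro v hv
      rw [hBaddef, Finset.mem_filter] at hv
      have hvG := (hTmem v hv.1).2 j hj
      exact ⟨hGlen _ hvG, hvG, hv.1⟩
    have hinj2 : ∀ v ∈ Bad (i, j), ∀ v' ∈ Bad (i, j),
        (Function.update v j [x],
          if v i = v j then (none : Option (Fin n)) else some ((v j).getLastD x)) =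
        (Function.update v' j [x],
          if v' i = v' j then (none : Option (Fin n)) else some ((v' j).getLastD x)) →
        v = v' := by
      intro v hv v' hv' heq
      have h1 : Function.update v j [x] = Function.update v' j [x] := congrArg Prod.fst heq
      have hcode := congrArg Prod.snd heq
      simp only at hcode
      have hagree : ∀ l, l ≠ j → v l = v' l := by
        intro l hl
        have := congrFun h1 l
        rwa [Function.update_of_ne hl, Function.update_of_ne hl] at this
      have hvivi : v i = v' i := hagree i hij
      funext l
      by_cases hl : l = j
      · rw [hl]
        by_cases hcase : v i = v j
        · rw [if_pos hcase] at hcode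
          by_cases hcase' : v' i = v' j
          · rw [← hcase, hvivi, hcase']
          · rw [if_neg hcase'] at hcode
            exact absurd hcode (by simp)
        · rw [if_neg hcase] at hcode
          by_cases hcase' : v' i = v' j
          · rw [if_pos hcase'] at hcode
            exact absurd hcode (by simp)
          · rw [if_neg hcase'] at hcode
            have hc : (v j).getLastD x = (v' j).getLastD x := by
              injection hcode
            rw [hBaddef, Finset.mem_filter] at hv hv'
            have hd : (v i).drop 1 = (v j).take (k-1) := by
              rcases hv.2 with h | h
              · exact absurd h hcase
              · exact h.2
            have hd' : (v' i).drop 1 = (v' j).take (k-1) := by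
              rcases hv'.2 with h | h
              · exact absurd h hcase'
              · exact h.2
            have hlenj : (v j).length = k := (hjG v (by rw [hBaddef, Finset.mem_filter]; exact hv)).1
            have hlenj' : (v' j).length = k := (hjG v' (by rw [hBaddef, Finset.mem_filter]; exact hv')).1
            have e1 : v j = (v j).take (k-1) ++ [(v j).getLastD x] :=
              eq_take_concat x k (v j) (by omega) hlenj
            have e2 : v' j = (v' j).take (k-1) ++ [(v' j).getLastD x] :=
              eq_take_concat x k (v' j) (by omega) hlenj'
            rw [e1, e2, ← hd, ← hd', hvivi, hc]
      · exact hagree l hl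
    calc (Bad (i,j)).card
        ≤ ((Fintype.piFinset S'') ×ˢ (Finset.univ : Finset (Option (Fin n)))).card := by
          apply Finset.card_le_card_of_injOn
            (fun v => (Function.update v j [x],
              if v i = v j then (none : Option (Fin n)) else some ((v j).getLastD x)))
          · intro v hv
            dsimp only
            rw [Finset.mem_coe, Finset.mem_product]
            refine ⟨?_, Finset.mem_univ _⟩
            rw [Fintype.mem_piFinset]
            intro l
            show Function.update v j [x] l ∈ S'' l
            by_cases hl : l = j
            · rw [hl]
              simp [hS''def]
            · rw [Function.update_of_ne hl]
              have hvT := (hjG v hv).2.2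
              rw [hTdef, Fintype.mem_piFinset] at hvT
              have := hvT l
              simp only [hS''def, if_neg hl]
              exact this
          · intro v hv v' hv' heq
            exact hinj2 v (Finset.mem_coe.mp hv) v' (Finset.mem_coe.mp hv') heq
      _ = (n+1) * g ^ (M-1) := by
          rw [Finset.card_product, hcodcard, Finset.card_univ, Fintype.card_option,
            Fintype.card_fin]
          ring
  -- putting together : g^M <= 2 * H.card
  have hgpos : 0 < g := by
    have : 0 < n ^ (k-2) := pow_pos (by omega) _
    omega
  have hHbig : g ^ M ≤ 2 * H.card := by
    have hgX : g ^ M = g * g ^ (M-1) := by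
      conv_lhs => rw [show M = (M-1)+1 by omega]
      rw [pow_succ]
      ring
    have hpairscard : pairs.card ≤ (M+1)^2 := by
      calc pairs.card ≤ ((Finset.univ : Finset (Fin (M+1))) ×ˢ Finset.univ).card :=
            Finset.card_filter_le _ _
        _ = (M+1)^2 := by
            rw [Finset.card_product, Finset.card_univ, Fintype.card_fin]
            ring
    have hcovercard : T.card ≤ H.card + (M+1)^2 * ((n+1) * g^(M-1)) := by
      calc T.card ≤ (H ∪ pairs.biUnion Bad).card := Finset.card_le_card hcover
        _ ≤ H.card + (pairs.biUnion Bad).card := Finset.card_union_le _ _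
        _ ≤ H.card + ∑ p ∈ pairs, (Bad p).card :=
            Nat.add_le_add_left Finset.card_biUnion_le _
        _ ≤ H.card + ∑ _p ∈ pairs, ((n+1) * g^(M-1)) :=
            Nat.add_le_add_left (Finset.sum_le_sum hBadcard) _
        _ = H.card + pairs.card * ((n+1)*g^(M-1)) := by
            rw [Finset.sum_const, smul_eq_mul]
        _ ≤ H.card + (M+1)^2 * ((n+1)*g^(M-1)) :=
            Nat.add_le_add_left (Nat.mul_le_mul_right _ hpairscard) _
    have hglarge : 2 * ((M+1)^2 * (n+1)) ≤ g := by
      have h1 : (M+1)^2 ≤ 2^(M+1) := nat_sq_le_two_pow (by omega)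
      have h2 : n+1 ≤ 2^n := Nat.lt_two_pow_self
      have h3 : (2:ℕ)^(k-2) ≤ n^(k-2) := Nat.pow_le_pow_left hn _
      have h4 : (2:ℕ)^(k-2) = 2 * (2^(M+1) * 2^n) := by
        rw [show k - 2 = (M+1) + n + 1 by omega]
        rw [pow_add, pow_add]
        ring
      have h5 : 2*((M+1)^2*(n+1)) ≤ 2*(2^(M+1) * 2^n) :=
        Nat.mul_le_mul_left 2 (Nat.mul_le_mul h1 h2)
      have hbg : b ≤ g := Nat.le_add_left b a
      calc 2*((M+1)^2*(n+1)) ≤ 2*(2^(M+1) * 2^n) := h5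
        _ = 2^(k-2) := h4.symm
        _ ≤ n^(k-2) := h3
        _ = b := rfl
        _ ≤ g := hbg
    have h5 : 2*((M+1)^2*((n+1) * g^(M-1))) ≤ g * g^(M-1) := by
      calc 2*((M+1)^2*((n+1)*g^(M-1))) = (2*((M+1)^2*(n+1)))*g^(M-1) := by ring
        _ ≤ g * g^(M-1) := Nat.mul_le_mul_right _ hglarge
    have e1 : T.card ≤ H.card + (M+1)^2 * ((n+1) * g^(M-1)) := hcovercard
    have e2 : 2*((M+1)^2 * ((n+1) * g^(M-1))) ≤ g^M := by rw [hgX]; exact h5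
    omega
  -- UD set estimates
  have hUDfin : (UD n L).Finite := by
    apply Set.Finite.subset
      (Finset.finite_toSet (Fintype.piFinset (fun i : Fin (M+1) => WordF n (L i))))
    intro v hv
    rw [Finset.mem_coe, Fintype.mem_piFinset]
    intro i
    rw [mem_WordF]
    exact hv.1 i
  have hUDge : g ^ M ≤ 2 * (UD n L).ncard := by
    have h7 : H.card ≤ (UD n L).ncard := by
      rw [← Set.ncard_coe_finset]
      exact Set.ncard_le_ncard hHsub hUDfin
    omega
  have hUDpos : 0 < (UD n L).ncard := by
    have : 0 < g ^ M := pow_pos hgpos M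
    omega
  have hUDne : (UD n L).Nonempty := by
    have hH : 0 < H.card := by
      have : 0 < g ^ M := pow_pos hgpos M
      omega
    obtain ⟨v, hv⟩ := Finset.card_pos.mp hH
    exact ⟨v, hHsub hv⟩
  -- PR bound
  set PF : Fin n → Finset (Fin (M+1) → List (Fin n)) := fun c =>
    Fintype.piFinset (fun l => if l = 0 then {[c]}
      else (WordF n k).filter (fun w => ¬ w.take 1 = [c])) with hPFdef
  have hPRsub : PR n L ⊆ ↑(Finset.univ.biUnion PF) := by
    intro v hv
    obtain ⟨hlen, hpinj, hpne, hnp⟩ := hv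
    have h0len : (v 0).length = 1 := by rw [hlen 0]; simp [hLdef]
    obtain ⟨c, hc⟩ := List.length_eq_one_iff.mp h0len
    rw [Finset.mem_coe, Finset.mem_biUnion]
    refine ⟨c, Finset.mem_univ _, ?_⟩
    rw [hPFdef, Fintype.mem_piFinset]
    intro l
    by_cases hl : l = 0
    · subst hl
      simp [hc]
    · simp only [if_neg hl, Finset.mem_filter, mem_WordF]
      refine ⟨by rw [hlen l]; simp [hLdef, hl], ?_⟩
      intro htake
      apply hnp 0 l (fun h => hl h.symm)
      rw [hc]
      refine ⟨(v l).drop 1, ?_⟩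
      rw [← htake]
      exact List.take_append_drop 1 (v l)
  have hPFcard : ∀ c : Fin n, (PF c).card = a ^ M := by
    intro c
    rw [hPFdef, Fintype.card_piFinset]
    have hc : ∀ l : Fin (M+1),
        ((if l = 0 then {[c]} else (WordF n k).filter (fun w => ¬ w.take 1 = [c]))).card
          = if l = 0 then 1 else a := by
      intro l
      by_cases h : l = 0
      · simp [h]
      · simp only [if_neg h]
        exact card_not_take_one (by omega) c
    rw [Finset.prod_congr rfl (fun l _ => hc l), prod_ite_one_card]
    congr 1
    have : (Finset.univ.filter (fun l : Fin (M+1) => ¬ l = 0))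
        = Finset.univ.erase 0 := by
      rw [← Finset.filter_ne']
    rw [this, Finset.card_erase_of_mem (Finset.mem_univ _), Finset.card_univ,
      Fintype.card_fin]
    omega
  have hPRcard : (PR n L).ncard ≤ n * a ^ M := by
    have h8 := Set.ncard_le_ncard hPRsub (Finset.finite_toSet _)
    rw [Set.ncard_coe_finset] at h8
    calc (PR n L).ncard ≤ (Finset.univ.biUnion PF).card := h8
      _ ≤ ∑ c, (PF c).card := Finset.card_biUnion_le
      _ = n * a ^ M := by
          rw [Finset.sum_congr rfl (fun c _ => hPFcard c), Finset.sum_const,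
            smul_eq_mul, Finset.card_univ, Fintype.card_fin]
  -- real arithmetic
  refine ⟨L, hL1, hUDne, ?_⟩
  have hn2 : (2:ℝ) ≤ (n:ℝ) := by exact_mod_cast hn
  have hd0 : (0:ℝ) < (n:ℝ)^2 - (n:ℝ) + 1 := by nlinarith
  have hq0 : (0:ℝ) ≤ ((n:ℝ)^2 - n) / ((n:ℝ)^2 - n + 1) := by
    apply div_nonneg _ (le_of_lt hd0)
    nlinarith
  have hbR : (0:ℝ) < (b:ℝ) := by
    have : 0 < b := pow_pos (by omega) _
    exact_mod_cast this
  have haR : (a:ℝ) = (b:ℝ) * ((n:ℝ)^2 - n) := by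
    have hle : n ^ (k-1) ≤ n ^ k := Nat.pow_le_pow_right (by omega) (by omega)
    have e1 : ((n:ℝ))^k = (n:ℝ)^(k-2) * (n:ℝ)^2 := by
      rw [← pow_add]
      congr 1
    have e2 : ((n:ℝ))^(k-1) = (n:ℝ)^(k-2) * (n:ℝ) := by
      rw [← pow_succ]
      congr 1
    rw [hadef, hbdef]
    push_cast [Nat.cast_sub hle]
    rw [e1, e2]
    ring
  have hgR : (g:ℝ) = (b:ℝ) * ((n:ℝ)^2 - (n:ℝ) + 1) := by
    rw [hgdef]
    push_cast
    rw [haR]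
    ring
  have haqg : (a:ℝ) = (((n:ℝ)^2 - n) / ((n:ℝ)^2 - n + 1)) * (g:ℝ) := by
    rw [hgR, haR, div_mul_eq_mul_div, eq_div_iff hd0.ne']
    ring
  have hUD0 : (0:ℝ) < ((UD n L).ncard : ℝ) := by exact_mod_cast hUDpos
  show ((PR n L).ncard : ℝ) / ((UD n L).ncard : ℝ) ≤ _
  rw [div_le_iff₀ hUD0]
  have hstep1 : ((PR n L).ncard : ℝ) ≤ (n:ℝ) * (a:ℝ)^M := by
    calc ((PR n L).ncard : ℝ) ≤ ((n * a ^ M : ℕ) : ℝ) := by exact_mod_cast hPRcard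
      _ = (n:ℝ) * (a:ℝ)^M := by push_cast; ring
  have hstep3 : ((g:ℝ))^M ≤ 2 * ((UD n L).ncard : ℝ) := by
    calc ((g:ℝ))^M = ((g ^ M : ℕ) : ℝ) := by push_cast; ring
      _ ≤ ((2 * (UD n L).ncard : ℕ) : ℝ) := by exact_mod_cast hUDge
      _ = 2 * ((UD n L).ncard : ℝ) := by push_cast; ring
  calc ((PR n L).ncard : ℝ) ≤ (n:ℝ) * (a:ℝ)^M := hstep1
    _ = (n:ℝ) * ((((n:ℝ)^2 - n) / ((n:ℝ)^2 - n + 1)) * (g:ℝ))^M := by rw [← haqg]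
    _ = (n:ℝ) * ((((n:ℝ)^2 - n) / ((n:ℝ)^2 - n + 1))^M * ((g:ℝ))^M) := by
        rw [mul_pow]
    _ ≤ (n:ℝ) * ((((n:ℝ)^2 - n) / ((n:ℝ)^2 - n + 1))^M * (2 * ((UD n L).ncard : ℝ))) := by
        apply mul_le_mul_of_nonneg_left _ (by positivity)
        apply mul_le_mul_of_nonneg_left hstep3 (pow_nonneg hq0 M)
    _ = 2 * (n:ℝ) * (((n:ℝ)^2 - n) / ((n:ℝ)^2 - n + 1)) ^ M * ((UD n L).ncard : ℝ) := by
        ring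

end Proof8

/-- Theorem 3 (consequence): for every fixed `n ≥ 2`, `ξ_{n,m} → 0` as `m → ∞`. -/
theorem stmt8 (n : ℕ) (hn : 2 ≤ n) :
    Filter.Tendsto (fun m : ℕ => xi n m) Filter.atTop (𝓝 0) := by
  have hrho_nonneg : ∀ (m : ℕ) (L : Fin m → ℕ), 0 ≤ rho n L := by
    intro m L
    simp only [rho]
    positivity
  have hxi_nonneg : ∀ m, 0 ≤ xi n m := by
    intro m
    apply Real.sInf_nonneg
    rintro r ⟨L, -, -, rfl⟩
    exact hrho_nonneg m L
  set q : ℝ := ((n:ℝ)^2 - n) / ((n:ℝ)^2 - n + 1) with hq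
  have hn2 : (2:ℝ) ≤ (n:ℝ) := by exact_mod_cast hn
  have hd0 : (0:ℝ) < (n:ℝ)^2 - (n:ℝ) + 1 := by nlinarith
  have hq0 : 0 ≤ q := div_nonneg (by nlinarith) hd0.le
  have hq1 : q < 1 := by
    rw [hq, div_lt_one hd0]
    linarith
  have hB : Filter.Tendsto (fun m : ℕ => 2 * (n:ℝ) * q ^ (m-1)) Filter.atTop (𝓝 0) := by
    have h1 : Filter.Tendsto (fun m : ℕ => q ^ m) Filter.atTop (𝓝 0) :=
      tendsto_pow_atTop_nhds_zero_of_lt_one hq0 hq1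
    have h2 : Filter.Tendsto (fun m : ℕ => q ^ (m-1)) Filter.atTop (𝓝 0) :=
      h1.comp (tendsto_sub_atTop_nat 1)
    have h3 := h2.const_mul (2 * (n:ℝ))
    simpa using h3
  apply tendsto_of_tendsto_of_tendsto_of_le_of_le' tendsto_const_nhds hB
  · exact Filter.Eventually.of_forall hxi_nonneg
  · filter_upwards [Filter.eventually_ge_atTop 13] with m hm
    obtain ⟨M, rfl⟩ : ∃ M, m = M + 1 := ⟨m - 1, by omega⟩
    obtain ⟨L, hL1, hNE, hbound⟩ := Proof8.main_bound n M hn (by omega)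
    have hbdd : BddBelow {r : ℝ | ∃ L : Fin (M+1) → ℕ,
        (∀ i, 1 ≤ L i) ∧ (UD n L).Nonempty ∧ r = rho n L} := by
      refine ⟨0, ?_⟩
      rintro r ⟨L', -, -, rfl⟩
      exact hrho_nonneg _ L'
    have hmem : rho n L ∈ {r : ℝ | ∃ L : Fin (M+1) → ℕ,
        (∀ i, 1 ≤ L i) ∧ (UD n L).Nonempty ∧ r = rho n L} := ⟨L, hL1, hNE, rfl⟩
    calc xi n (M+1) ≤ rho n L := csInf_le hbdd hmem
      _ ≤ 2 * (n:ℝ) * q ^ M := hbound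
      _ = 2 * (n:ℝ) * q ^ (M + 1 - 1) := by norm_num
end

section
/- For all integers n ≥ 2 and m ≥ 1, ξ_{n,m} ≤ 1 − (m−1)/n^{⌈log_n m⌉}. -/
open Finset Filter Topology

/-- Injectivity of flattening a list of fixed-length blocks. -/
lemma flatten_map_inj {Y X : Type*} (e : Y → List X) (k : ℕ) (hk : 0 < k)
    (hl : ∀ a, (e a).length = k) (he : Function.Injective e) :
    Function.Injective (fun l : List Y => (l.map e).flatten) := by
  intro l1 l2 h
  dsimp at h
  induction l1 generalizing l2 with
  | nil =>
    cases l2 with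
    | nil => rfl
    | cons b l2 =>
      simp only [List.map_nil, List.flatten_nil, List.map_cons, List.flatten_cons] at h
      have hb : e b = [] := by
        cases (List.append_eq_nil_iff.mp h.symm); assumption
      have := hl b
      rw [hb] at this; simp at this; omega
  | cons a l1 ih =>
    cases l2 with
    | nil =>
      simp only [List.map_nil, List.flatten_nil, List.map_cons, List.flatten_cons] at h
      have ha : e a = [] := by
        cases (List.append_eq_nil_iff.mp h); assumption
      have := hl a
      rw [ha] at this; simp at this; omega
    | cons b l2 =>
      simp only [List.map_cons, List.flatten_cons] at h
      obtain ⟨h1, h2⟩ := List.append_inj h (by rw [hl a, hl b])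
      rw [he h1, ih h2]

/-- Split a list into `t` chunks of length `k`. -/
def chunk {X : Type*} (k : ℕ) : ℕ → List X → List (List X)
  | 0, _ => []
  | (t+1), u => u.take k :: chunk k t (u.drop k)

lemma chunk_flatten {X : Type*} (k : ℕ) : ∀ (t : ℕ) (u : List X), u.length = k * t →
    (chunk k t u).flatten = u := by
  intro t
  induction t with
  | zero => intro u hu; simp at hu; simp [chunk, hu]
  | succ t ih =>
    intro u hu
    simp only [chunk, List.flatten_cons]
    rw [ih (u.drop k) (by simp [hu, Nat.mul_succ]), List.take_append_drop]

lemma chunk_length {X : Type*} (k : ℕ) : ∀ (t : ℕ) (u : List X), (chunk k t u).length = t := by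
  intro t
  induction t with
  | zero => intro u; rfl
  | succ t ih => intro u; simp [chunk, ih]

lemma mem_chunk_length {X : Type*} (k : ℕ) : ∀ (t : ℕ) (u : List X), u.length = k * t →
    ∀ l ∈ chunk k t u, l.length = k := by
  intro t
  induction t with
  | zero => intro u _ l hl; simp [chunk] at hl
  | succ t ih =>
    intro u hu l hl
    simp only [chunk, List.mem_cons] at hl
    rcases hl with rfl | hl
    · simp [hu, Nat.mul_succ]
    · exact ih (u.drop k) (by simp [hu, Nat.mul_succ]) l hl

lemma exists_map_of_forall_mem {ι β : Type*} (f : ι → β) :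
    ∀ (cl : List β), (∀ x ∈ cl, ∃ i, f i = x) → ∃ l : List ι, cl = l.map f := by
  intro cl
  induction cl with
  | nil => intro _; exact ⟨[], rfl⟩
  | cons x cl ih =>
    intro h
    obtain ⟨i, hi⟩ := h x (by simp)
    obtain ⟨l, hl⟩ := ih (fun y hy => h y (by simp [hy]))
    exact ⟨i :: l, by simp [hi, ← hl]⟩

/-- The finset of all lists of a given length over a fintype. -/
def tuples (α : Type*) [Fintype α] [DecidableEq α] (ℓ : ℕ) : Finset (List α) :=
  Finset.image List.ofFn (Finset.univ : Finset (Fin ℓ → α))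

lemma ofFn_injective {α : Type*} {ℓ : ℕ} :
    Function.Injective (List.ofFn : (Fin ℓ → α) → List α) := by
  intro f g h
  exact List.ofFn_inj.mp h

lemma mem_tuples {α : Type*} [Fintype α] [DecidableEq α] {ℓ : ℕ} {l : List α} :
    l ∈ tuples α ℓ ↔ l.length = ℓ := by
  constructor
  · rintro h
    obtain ⟨f, _, rfl⟩ := Finset.mem_image.mp h
    simp
  · rintro rfl
    exact Finset.mem_image.mpr ⟨l.get, Finset.mem_univ _, List.ofFn_get l⟩

lemma card_tuples (α : Type*) [Fintype α] [DecidableEq α] (ℓ : ℕ) :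
    (tuples α ℓ).card = (Fintype.card α) ^ ℓ := by
  rw [tuples, Finset.card_image_of_injective _ ofFn_injective, Finset.card_univ,
    Fintype.card_fun, Fintype.card_fin]

/-- Main lemma: distinct single letters plus one long word containing a letter
outside the range form a uniquely decodable code. -/
lemma udMain {Y : Type*} (m : ℕ) (y : Fin (m-1) → Y) (hy : Function.Injective y)
    (u : List Y) (hbad : ∃ b ∈ u, b ∉ Set.range y) :
    IsUDCode (fun i : Fin m => if h : (i : ℕ) < m - 1 then [y ⟨i, h⟩] else u) := by
  classical
  set V : Fin m → List Y := fun i => if h : (i : ℕ) < m - 1 then [y ⟨i, h⟩] else u with hV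
  have hune : u ≠ [] := by rintro rfl; obtain ⟨b, hb, _⟩ := hbad; simp at hb
  have hVne : ∀ i, V i ≠ [] := by
    intro i; rw [hV]; dsimp only; split
    · simp
    · exact hune
  have hFnil : ∀ l : List (Fin m), (l.map V).flatten = [] → l = [] := by
    intro l hl
    cases l with
    | nil => rfl
    | cons a l =>
      simp only [List.map_cons, List.flatten_cons, List.append_eq_nil_iff] at hl
      exact absurd hl.1 (hVne a)
  -- least bad position in u
  have hex : ∃ q : ℕ, ∃ b, u[q]? = some b ∧ b ∉ Set.range y := by
    obtain ⟨b, hb, hbr⟩ := hbad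
    obtain ⟨q, hq, hq2⟩ := List.getElem_of_mem hb
    exact ⟨q, b, by rw [List.getElem?_eq_getElem hq, hq2], hbr⟩
  obtain ⟨p, ⟨bp, hbp, hbpr⟩, hmin⟩ :
      ∃ p : ℕ, (∃ b, u[p]? = some b ∧ b ∉ Set.range y) ∧
        ∀ q < p, ¬ (∃ b : Y, u[q]? = some b ∧ b ∉ Set.range y) :=
    ⟨Nat.find hex, Nat.find_spec hex, fun q hq => Nat.find_min hex hq⟩
  have hpu : p < u.length := (List.getElem?_eq_some_iff.mp hbp).1
  -- Lemma F
  have F : ∀ s : List (Fin m), ∀ q : ℕ, q ≤ p → ∀ b, ((s.map V).flatten)[q]? = some b →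
      b ∉ Set.range y → q = p ∧ ∃ (j : Fin m) (s' : List (Fin m)),
        s = j :: s' ∧ ¬ ((j : ℕ) < m - 1) := by
    intro s
    induction s with
    | nil => intro q _ b hb; simp at hb
    | cons a s' ih =>
      intro q hq b hb hbr
      by_cases ha : (a : ℕ) < m - 1
      · have hVa : V a = [y ⟨a, ha⟩] := by rw [hV]; dsimp only; rw [dif_pos ha]
        rw [List.map_cons, List.flatten_cons, hVa] at hb
        cases q with
        | zero =>
          simp at hb
          exact absurd ⟨⟨a, ha⟩, hb⟩ hbr
        | succ q' =>
          simp only [List.cons_append, List.getElem?_cons_succ] at hb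
          have := ih q' (by omega) b hb hbr
          omega
      · have hVa : V a = u := by rw [hV]; dsimp only; rw [dif_neg ha]
        rw [List.map_cons, List.flatten_cons, hVa] at hb
        have hqu : q < u.length := lt_of_le_of_lt hq hpu
        rw [List.getElem?_append, if_pos hqu] at hb
        rcases Nat.lt_or_ge q p with hqp | hqp
        · exact absurd ⟨b, hb, hbr⟩ (hmin q hqp)
        · exact ⟨le_antisymm hq hqp, a, s', rfl, ha⟩
  -- no word starting with a short letter can equal a word starting with u
  have mix : ∀ (a : Fin m) (ha : (a : ℕ) < m - 1) (s' t' : List (Fin m)),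
      ((a :: s').map V).flatten ≠ u ++ (t'.map V).flatten := by
    intro a ha s' t' h
    have h1 : (u ++ (t'.map V).flatten)[p]? = some bp := by
      rw [List.getElem?_append, if_pos hpu]; exact hbp
    rw [← h] at h1
    obtain ⟨_, j, s'', hcons, hj⟩ := F (a :: s') p le_rfl bp h1 hbpr
    rw [List.cons.injEq] at hcons
    exact hj (hcons.1 ▸ ha)
  -- main induction
  intro s
  induction s with
  | nil => intro t hs _ _; exact absurd rfl hs
  | cons a s' ih =>
    intro t _ ht heq
    cases t with
    | nil => exact absurd rfl ht
    | cons b t' =>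
      simp only [List.map_cons, List.flatten_cons] at heq
      by_cases ha : (a : ℕ) < m - 1 <;> by_cases hb : (b : ℕ) < m - 1
      · have hVa : V a = [y ⟨a, ha⟩] := by rw [hV]; dsimp only; rw [dif_pos ha]
        have hVb : V b = [y ⟨b, hb⟩] := by rw [hV]; dsimp only; rw [dif_pos hb]
        rw [hVa, hVb] at heq
        simp only [List.cons_append, List.nil_append, List.cons.injEq] at heq
        have hab : a = b := by
          have := hy heq.1
          exact Fin.ext (congrArg Fin.val this : ((⟨a, ha⟩ : Fin (m-1)) : ℕ) = _)
        subst hab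
        rcases eq_or_ne s' [] with rfl | hs'
        · have : t' = [] := hFnil t' (by simpa using heq.2.symm)
          rw [this]
        · have ht' : t' ≠ [] := by
            rintro rfl
            exact hs' (hFnil s' (by simpa using heq.2))
          rw [ih t' hs' ht' heq.2]
      · have hVa : V a = [y ⟨a, ha⟩] := by rw [hV]; dsimp only; rw [dif_pos ha]
        have hVb : V b = u := by rw [hV]; dsimp only; rw [dif_neg hb]
        have hcontr : ((a :: s').map V).flatten = u ++ (t'.map V).flatten := by
          rw [List.map_cons, List.flatten_cons, ← hVb]; exact heq
        exact absurd hcontr (mix a ha s' t')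
      · have hVa : V a = u := by rw [hV]; dsimp only; rw [dif_neg ha]
        have hVb : V b = [y ⟨b, hb⟩] := by rw [hV]; dsimp only; rw [dif_pos hb]
        have hcontr : ((b :: t').map V).flatten = u ++ (s'.map V).flatten := by
          rw [List.map_cons, List.flatten_cons, ← hVa]; exact heq.symm
        exact absurd hcontr (mix b hb t' s')
      · have hVa : V a = u := by rw [hV]; dsimp only; rw [dif_neg ha]
        have hVb : V b = u := by rw [hV]; dsimp only; rw [dif_neg hb]
        rw [hVa, hVb] at heq
        have heq2 := List.append_cancel_left heq
        have hab : a = b := Fin.ext (by omega)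
        subst hab
        rcases eq_or_ne s' [] with rfl | hs'
        · have : t' = [] := hFnil t' (by simpa using heq2.symm)
          rw [this]
        · have ht' : t' ≠ [] := by
            rintro rfl
            exact hs' (hFnil s' (by simpa using heq2))
          rw [ih t' hs' ht' heq2]

lemma lift_UD {Y X : Type*} (e : Y → List X)
    (hE : Function.Injective fun l : List Y => (l.map e).flatten)
    {m : ℕ} (V : Fin m → List Y) (hV : IsUDCode V) :
    IsUDCode (fun i => ((V i).map e).flatten) := by
  intro s t hs ht h
  have key : ∀ l : List (Fin m),
      (l.map fun i => ((V i).map e).flatten).flatten = (((l.map V).flatten).map e).flatten := by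
    intro l
    induction l with
    | nil => simp
    | cons a l ih => simp [ih]
  rw [key, key] at h
  exact hV s t hs ht (hE h)

lemma keyCount (n m k t : ℕ) (hn : 2 ≤ n) (hm : 1 ≤ m) (hk : 1 ≤ k) (ht : 1 ≤ t)
    (hmK : m ≤ n ^ k) :
    ∃ L : Fin m → ℕ, (∀ i, 1 ≤ L i) ∧ (UD n L).Nonempty ∧
      rho n L ≤ (((n^k - (m-1)) * (n^k)^(t-1) : ℕ) : ℝ) / (((n^k)^t - (m-1)^t : ℕ) : ℝ) := by
  classical
  obtain ⟨t', rfl⟩ : ∃ t'', t = t'' + 1 := ⟨t - 1, by omega⟩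
  simp only [Nat.add_sub_cancel]
  have hK2 : 2 ≤ n ^ k := le_trans hn (by simpa using Nat.pow_le_pow_right (by omega) hk)
  set L : Fin m → ℕ := fun i => if (i : ℕ) < m - 1 then k else k * (t' + 1) with hL
  have hM : m - 1 < m := by omega
  set M : Fin m := ⟨m - 1, hM⟩ with hMdef
  have hLM : L M = k * (t' + 1) := by simp [hL, hMdef]
  have hLlt : ∀ (i : Fin m) (h : (i : ℕ) < m - 1), L i = k := fun i h => by simp [hL, h]
  set Φ : (Σ _ : Fin (m-1) → List (Fin n), List (Fin n)) → (Fin m → List (Fin n)) :=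
    fun p i => if h : (i : ℕ) < m - 1 then p.1 ⟨i, h⟩ else p.2 with hΦdef
  have hΦ : Function.Injective Φ := by
    rintro ⟨w, u⟩ ⟨w', u'⟩ h
    have hu : u = u' := by
      have := congrFun h M
      simpa [hΦdef, hMdef] using this
    have hw : w = w' := by
      funext i
      have := congrFun h ⟨(i : ℕ), by omega⟩
      simpa [hΦdef] using this
    rw [hu, hw]
  set Winjf : Finset (Fin (m-1) → List (Fin n)) :=
    (Fintype.piFinset fun _ => tuples (Fin n) k).filter Function.Injective with hWdef
  have hWfact : ∀ w ∈ Winjf, (∀ i, (w i).length = k) ∧ Function.Injective w := by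
    intro w hw
    rw [hWdef, Finset.mem_filter, Fintype.mem_piFinset] at hw
    exact ⟨fun i => mem_tuples.mp (hw.1 i), hw.2⟩
  set Blocks : (Fin (m-1) → List (Fin n)) → Finset (List (Fin n)) :=
    fun w => (tuples (Fin (m-1)) (t' + 1)).image fun l => (l.map w).flatten with hBdef
  set PRfin := Winjf.sigma fun w =>
    (tuples (Fin n) (k * (t' + 1))).filter fun u => ∀ i, ¬ w i <+: u with hPRfin
  set UDfin := Winjf.sigma fun w =>
    tuples (Fin n) (k * (t' + 1)) \ Blocks w with hUDfin
  have hktk : k * (t' + 1) - k = k * t' := by rw [Nat.mul_succ]; omega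
  have hkle : k ≤ k * (t' + 1) := by rw [Nat.mul_succ]; omega
  -- card of PRfin
  have hPRcard : PRfin.card = Winjf.card * ((n ^ k - (m-1)) * (n ^ k) ^ t') := by
    rw [hPRfin, Finset.card_sigma]
    rw [Finset.sum_congr rfl (fun w hw => ?_), Finset.sum_const, smul_eq_mul]
    obtain ⟨hwlen, hwinj⟩ := hWfact w hw
    have hKimg : (Finset.univ.image w) ⊆ tuples (Fin n) k := by
      intro x hx
      obtain ⟨i, _, rfl⟩ := Finset.mem_image.mp hx
      exact mem_tuples.mpr (hwlen i)
    have hprod : ((tuples (Fin n) k \ Finset.univ.image w) ×ˢ tuples (Fin n) (k * t')).card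
        = (n ^ k - (m-1)) * (n ^ k) ^ t' := by
      rw [Finset.card_product, Finset.card_sdiff_of_subset hKimg, card_tuples,
        Finset.card_image_of_injective _ hwinj, Finset.card_univ, Fintype.card_fin,
        Fintype.card_fin, card_tuples, Fintype.card_fin, pow_mul]
    rw [← hprod]
    apply Finset.card_bij' (fun u _ => ((u.take k : List (Fin n)), u.drop k))
      (fun p _ => p.1 ++ p.2)
    · intro u hu
      rw [Finset.mem_filter] at hu
      obtain ⟨hu1, hu2⟩ := hu
      have hulen := mem_tuples.mp hu1
      rw [Finset.mem_product]
      refine ⟨Finset.mem_sdiff.mpr ⟨mem_tuples.mpr ?_, ?_⟩, mem_tuples.mpr ?_⟩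
      · rw [List.length_take, hulen]; omega
      · intro hmem
        obtain ⟨i, _, hi⟩ := Finset.mem_image.mp hmem
        refine hu2 i ?_
        rw [List.prefix_iff_eq_take, hwlen i, hi]
      · rw [List.length_drop, hulen, hktk]
    · intro p hp
      rw [Finset.mem_product] at hp
      obtain ⟨hp1, hp2⟩ := hp
      rw [Finset.mem_sdiff] at hp1
      have h1len := mem_tuples.mp hp1.1
      have h2len := mem_tuples.mp hp2
      rw [Finset.mem_filter]
      refine ⟨mem_tuples.mpr ?_, ?_⟩
      · rw [List.length_append, h1len, h2len, Nat.mul_succ]; omega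
      · intro i hpre
        refine hp1.2 (Finset.mem_image.mpr ⟨i, Finset.mem_univ i, ?_⟩)
        rw [List.prefix_iff_eq_take, hwlen i, List.take_left' h1len] at hpre
        exact hpre
    · intro u _; exact List.take_append_drop k u
    · intro p hp
      rw [Finset.mem_product] at hp
      have h1len := mem_tuples.mp (Finset.mem_sdiff.mp hp.1).1
      exact Prod.ext (List.take_left' h1len) (List.drop_left' h1len)
  -- card of UDfin
  have hUDcard : UDfin.card = Winjf.card * ((n ^ k) ^ (t' + 1) - (m-1) ^ (t' + 1)) := by
    rw [hUDfin, Finset.card_sigma]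
    rw [Finset.sum_congr rfl (fun w hw => ?_), Finset.sum_const, smul_eq_mul]
    obtain ⟨hwlen, hwinj⟩ := hWfact w hw
    have hBsub : Blocks w ⊆ tuples (Fin n) (k * (t' + 1)) := by
      intro x hx
      obtain ⟨l, hl, rfl⟩ := Finset.mem_image.mp hx
      refine mem_tuples.mpr ?_
      rw [List.length_flatten, List.map_map]
      have : (List.map (List.length ∘ w) l) = List.map (fun _ => k) l :=
        List.map_congr_left fun a _ => hwlen a
      rw [this, List.map_const', List.sum_replicate, smul_eq_mul, mem_tuples.mp hl,
        Nat.mul_comm]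
    rw [Finset.card_sdiff_of_subset hBsub, card_tuples, Fintype.card_fin, pow_mul, hBdef]
    rw [Finset.card_image_of_injective _
      (flatten_map_inj w k (by omega) hwlen hwinj), card_tuples, Fintype.card_fin]
  -- PR is inside the image of PRfin
  have hPRsub : PR n L ⊆ Φ '' ↑PRfin := by
    rintro v ⟨hvlen, hvinj, hvne, hvpre⟩
    refine ⟨⟨fun i => v ⟨(i : ℕ), by omega⟩, v M⟩, ?_, ?_⟩
    · rw [Finset.mem_coe, hPRfin, Finset.mem_sigma]
      constructor
      · rw [hWdef, Finset.mem_filter, Fintype.mem_piFinset]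
        refine ⟨fun i => mem_tuples.mpr ?_, fun i j hij => ?_⟩
        · rw [hvlen, hLlt _ (by exact i.2)]
        · have := hvinj hij
          exact Fin.ext (by simpa using congrArg Fin.val this)
      · rw [Finset.mem_filter]
        refine ⟨mem_tuples.mpr (by rw [hvlen, hLM]), fun i => ?_⟩
        refine hvpre _ _ ?_
        intro hcontr
        have := congrArg Fin.val hcontr
        simp [hMdef] at this
        omega
    · funext j
      by_cases hj : (j : ℕ) < m - 1
      · simp only [hΦdef, dif_pos hj]
      · simp only [hΦdef, dif_neg hj]
        have hjv : (j : ℕ) = m - 1 := by omega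
        congr 1
        exact Fin.ext (by simp [hMdef, hjv])
  -- image of UDfin is inside UD
  have hUDsub : Φ '' ↑UDfin ⊆ UD n L := by
    rintro x ⟨⟨w, u⟩, hmem, rfl⟩
    rw [Finset.mem_coe, hUDfin, Finset.mem_sigma] at hmem
    obtain ⟨hwmem, humem⟩ := hmem
    obtain ⟨hwlen, hwinj⟩ := hWfact w hwmem
    rw [Finset.mem_sdiff] at humem
    have hulen : u.length = k * (t' + 1) := mem_tuples.mp humem.1
    constructor
    · intro i
      by_cases hj : (i : ℕ) < m - 1
      · simp only [hΦdef, dif_pos hj]; rw [hwlen, hLlt _ hj]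
      · simp only [hΦdef, dif_neg hj]; rw [hulen, hL]; simp [hj]
    · -- unique decodability via the super-letter alphabet
      set Y := {l : List (Fin n) // l.length = k} with hYdef
      have hEinj : Function.Injective fun l : List Y => (l.map Subtype.val).flatten :=
        flatten_map_inj _ k (by omega) (fun a => a.2) Subtype.val_injective
      set y : Fin (m-1) → Y := fun i => ⟨w i, hwlen i⟩ with hydef
      have hyinj : Function.Injective y := by
        intro i j hij
        exact hwinj (congrArg Subtype.val hij)
      set uY : List Y := (chunk k (t' + 1) u).attach.map
        (fun z => ⟨z.1, mem_chunk_length k (t' + 1) u hulen z.1 z.2⟩) with huYdef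
      have huYval : uY.map Subtype.val = chunk k (t' + 1) u := by
        rw [huYdef, List.map_map]
        exact List.attach_map_subtype_val _
      have hbad : ∃ b ∈ uY, b ∉ Set.range y := by
        by_contra hc
        push_neg at hc
        have hforall : ∀ x ∈ chunk k (t' + 1) u, ∃ i, w i = x := by
          intro x hx
          obtain ⟨i, hi⟩ := hc ⟨x, mem_chunk_length k (t' + 1) u hulen x hx⟩
            (by rw [huYdef]; exact List.mem_map.mpr ⟨⟨x, hx⟩, List.mem_attach _ _, rfl⟩)
          exact ⟨i, congrArg Subtype.val hi⟩
        obtain ⟨l, hl⟩ := exists_map_of_forall_mem w _ hforall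
        refine humem.2 (Finset.mem_image.mpr ⟨l, mem_tuples.mpr ?_, ?_⟩)
        · have := chunk_length k (t' + 1) u
          rw [hl, List.length_map] at this
          exact this
        · rw [← hl, chunk_flatten k (t' + 1) u hulen]
      have hVud := udMain m y hyinj uY hbad
      have hEq : Φ ⟨w, u⟩ = fun i =>
          (((fun i : Fin m => if h : (i : ℕ) < m - 1 then [y ⟨i, h⟩] else uY) i).map
            Subtype.val).flatten := by
        funext i
        by_cases hj : (i : ℕ) < m - 1
        · simp only [hΦdef, dif_pos hj, hydef, List.map_cons, List.map_nil,
            List.flatten_cons, List.flatten_nil, List.append_nil]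
        · simp only [hΦdef, dif_neg hj]
          rw [huYval, chunk_flatten k (t' + 1) u hulen]
      rw [hEq]
      exact lift_UD Subtype.val hEinj _ hVud
  -- finiteness of UD
  have hUDfinite : (UD n L).Finite := by
    apply Set.Finite.subset (Fintype.piFinset fun i => tuples (Fin n) (L i)).finite_toSet
    intro v hv
    rw [Finset.mem_coe, Fintype.mem_piFinset]
    exact fun i => mem_tuples.mpr (hv.1 i)
  -- Winjf is nonempty
  have hWne : Winjf.Nonempty := by
    have hmK' : m - 1 ≤ n ^ k := by omega
    refine ⟨fun i => List.ofFn (finFunctionFinEquiv.symm (Fin.castLE hmK' i)), ?_⟩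
    rw [hWdef, Finset.mem_filter, Fintype.mem_piFinset]
    constructor
    · intro i; exact mem_tuples.mpr (by simp)
    · intro i j hij
      exact Fin.castLE_injective hmK' (finFunctionFinEquiv.symm.injective (List.ofFn_inj.mp hij))
  have hbpos : 0 < (n ^ k) ^ (t' + 1) - (m-1) ^ (t' + 1) := by
    have : (m-1) ^ (t' + 1) < (n ^ k) ^ (t' + 1) :=
      Nat.pow_lt_pow_left (by omega) (by omega)
    omega
  have hUDfne : UDfin.Nonempty := by
    obtain ⟨w0, hw0⟩ := hWne
    have : (tuples (Fin n) (k * (t' + 1)) \ Blocks w0).Nonempty := by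
      apply Finset.card_pos.mp
      obtain ⟨hwlen, hwinj⟩ := hWfact w0 hw0
      have hBsub : Blocks w0 ⊆ tuples (Fin n) (k * (t' + 1)) := by
        intro x hx
        obtain ⟨l, hl, rfl⟩ := Finset.mem_image.mp hx
        refine mem_tuples.mpr ?_
        rw [List.length_flatten, List.map_map]
        have : (List.map (List.length ∘ w0) l) = List.map (fun _ => k) l :=
          List.map_congr_left fun a _ => hwlen a
        rw [this, List.map_const', List.sum_replicate, smul_eq_mul, mem_tuples.mp hl,
          Nat.mul_comm]
      rw [Finset.card_sdiff_of_subset hBsub, card_tuples, Fintype.card_fin, pow_mul, hBdef,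
        Finset.card_image_of_injective _
          (flatten_map_inj w0 k (by omega) hwlen hwinj), card_tuples, Fintype.card_fin]
      exact hbpos
    obtain ⟨u0, hu0⟩ := this
    exact ⟨⟨w0, u0⟩, by rw [hUDfin, Finset.mem_sigma]; exact ⟨hw0, hu0⟩⟩
  have hUDne : (UD n L).Nonempty := by
    obtain ⟨p0, hp0⟩ := hUDfne
    exact ⟨Φ p0, hUDsub ⟨p0, by exact_mod_cast hp0, rfl⟩⟩
  -- cardinality bounds
  have hPRle : (PR n L).ncard ≤ Winjf.card * ((n ^ k - (m-1)) * (n ^ k) ^ t') := by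
    calc (PR n L).ncard ≤ (Φ '' ↑PRfin).ncard := by
          exact Set.ncard_le_ncard hPRsub (PRfin.finite_toSet.image Φ)
      _ = ((PRfin.image Φ) : Finset _).card := by
          rw [← Finset.coe_image, Set.ncard_coe_finset]
      _ = PRfin.card := Finset.card_image_of_injective _ hΦ
      _ = _ := hPRcard
  have hUDge : Winjf.card * ((n ^ k) ^ (t' + 1) - (m-1) ^ (t' + 1)) ≤ (UD n L).ncard := by
    calc Winjf.card * ((n ^ k) ^ (t' + 1) - (m-1) ^ (t' + 1)) = UDfin.card := hUDcard.symm
      _ = ((UDfin.image Φ) : Finset _).card := (Finset.card_image_of_injective _ hΦ).symm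
      _ = (Φ '' ↑UDfin).ncard := by rw [← Finset.coe_image, Set.ncard_coe_finset]
      _ ≤ (UD n L).ncard := Set.ncard_le_ncard hUDsub hUDfinite
  -- final arithmetic
  refine ⟨L, fun i => ?_, hUDne, ?_⟩
  · rw [hL]; dsimp only; split <;> [omega; exact le_trans hk hkle]
  · have hWpos : 0 < Winjf.card := Finset.card_pos.mpr hWne
    rw [rho]
    have h1 : ((PR n L).ncard : ℝ) ≤ (Winjf.card * ((n ^ k - (m-1)) * (n ^ k) ^ t') : ℕ) :=
      Nat.cast_le.mpr hPRle
    have h2 : ((Winjf.card * ((n ^ k) ^ (t' + 1) - (m-1) ^ (t' + 1)) : ℕ) : ℝ)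
        ≤ ((UD n L).ncard : ℝ) := Nat.cast_le.mpr hUDge
    have h3 : (0 : ℝ) < ((Winjf.card * ((n ^ k) ^ (t' + 1) - (m-1) ^ (t' + 1)) : ℕ) : ℝ) := by
      have : 0 < Winjf.card * ((n ^ k) ^ (t' + 1) - (m-1) ^ (t' + 1)) :=
        Nat.mul_pos hWpos hbpos
      exact_mod_cast this
    calc ((PR n L).ncard : ℝ) / ((UD n L).ncard : ℝ)
        ≤ ((Winjf.card * ((n ^ k - (m-1)) * (n ^ k) ^ t') : ℕ) : ℝ)
          / ((Winjf.card * ((n ^ k) ^ (t' + 1) - (m-1) ^ (t' + 1)) : ℕ) : ℝ) :=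
          div_le_div₀ (Nat.cast_nonneg _) h1 h3 h2
      _ = (((n ^ k - (m-1)) * (n ^ k) ^ t' : ℕ) : ℝ)
          / (((n ^ k) ^ (t' + 1) - (m-1) ^ (t' + 1) : ℕ) : ℝ) := by
          rw [Nat.cast_mul Winjf.card, Nat.cast_mul Winjf.card,
            mul_div_mul_left _ _ (show ((Winjf.card : ℕ) : ℝ) ≠ 0 from
              Nat.cast_ne_zero.mpr hWpos.ne')]

lemma arith (K c t : ℕ) (hK : 2 ≤ K) (hc : c < K) (ht : 1 ≤ t) :
    (((K - c) * K ^ (t-1) : ℕ) : ℝ) / ((K ^ t - c ^ t : ℕ) : ℝ)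
      ≤ ((K : ℝ) - c) / K + (((K : ℝ) - 1) / K) ^ t := by
  obtain ⟨t', rfl⟩ : ∃ t'', t = t'' + 1 := ⟨t - 1, by omega⟩
  simp only [Nat.add_sub_cancel]
  have hA2 : (2 : ℝ) ≤ (K : ℝ) := by exact_mod_cast hK
  have hγ0 : (0 : ℝ) ≤ (c : ℝ) := Nat.cast_nonneg c
  have hγ1 : (c : ℝ) + 1 ≤ (K : ℝ) := by exact_mod_cast hc
  set A := (K : ℝ) with hAdef
  set γ := (c : ℝ) with hγdef
  have hApos : 0 < A := by linarith
  have hnum : (((K - c) * K ^ t' : ℕ) : ℝ) = (A - γ) * A ^ t' := by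
    push_cast [Nat.cast_sub hc.le]; ring
  have hden : ((K ^ (t'+1) - c ^ (t'+1) : ℕ) : ℝ) = A ^ (t'+1) - γ ^ (t'+1) := by
    push_cast [Nat.cast_sub (Nat.pow_le_pow_left hc.le (t'+1))]; ring
  rw [hnum, hden]
  have h1 : γ ^ (t'+1) ≤ A ^ t' * γ := by
    rw [pow_succ]
    exact mul_le_mul_of_nonneg_right (pow_le_pow_left₀ hγ0 (by linarith) t') hγ0
  have hb : A ^ t' * (A - γ) ≤ A ^ (t'+1) - γ ^ (t'+1) := by
    have h2 : A ^ (t'+1) = A ^ t' * A := pow_succ A t'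
    have h3 : A ^ t' * (A - γ) = A ^ t' * A - A ^ t' * γ := by ring
    linarith
  have hbpos : 0 < A ^ (t'+1) - γ ^ (t'+1) := by
    have : 0 < A ^ t' * (A - γ) := mul_pos (pow_pos hApos t') (by linarith)
    linarith
  rw [div_pow, div_add_div _ _ (ne_of_gt hApos) (ne_of_gt (pow_pos hApos (t'+1))),
    div_le_div_iff₀ hbpos (by positivity)]
  have h4 : γ ^ (t'+1) ≤ (A - 1) ^ (t'+1) := pow_le_pow_left₀ hγ0 (by linarith) _
  have key : (A - γ) * A ^ (t'+1) * γ ^ (t'+1)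
      ≤ A * (A-1) ^ (t'+1) * (A ^ (t'+1) - γ ^ (t'+1)) := by
    have hx : 0 ≤ A * (A-1) ^ (t'+1) := by
      apply mul_nonneg (by linarith)
      apply pow_nonneg; linarith
    have step1 : A * (A-1) ^ (t'+1) * (A ^ t' * (A - γ))
        ≤ A * (A-1) ^ (t'+1) * (A ^ (t'+1) - γ ^ (t'+1)) :=
      mul_le_mul_of_nonneg_left hb hx
    have hy : 0 ≤ A * (A ^ t' * (A - γ)) := by
      apply mul_nonneg (by linarith)
      apply mul_nonneg (pow_nonneg (by linarith) t') (by linarith)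
    have step2 : A * (A ^ t' * (A - γ)) * γ ^ (t'+1)
        ≤ A * (A ^ t' * (A - γ)) * (A-1) ^ (t'+1) :=
      mul_le_mul_of_nonneg_left h4 hy
    have hid : (A - γ) * A ^ (t'+1) * γ ^ (t'+1) = A * (A ^ t' * (A - γ)) * γ ^ (t'+1) := by
      rw [pow_succ]; ring
    have hid2 : A * (A ^ t' * (A - γ)) * (A-1) ^ (t'+1) = A * (A-1) ^ (t'+1) * (A ^ t' * (A - γ)) := by
      ring
    linarith
  have hid3 : (A - γ) * A ^ t' * (A * A ^ (t'+1)) = (A - γ) * A ^ (t'+1) * A ^ (t'+1) := by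
    rw [pow_succ]; ring
  have hid4 : ((A - γ) * A ^ (t'+1) + A * (A-1) ^ (t'+1)) * (A ^ (t'+1) - γ ^ (t'+1))
      = (A - γ) * A ^ (t'+1) * A ^ (t'+1) - (A - γ) * A ^ (t'+1) * γ ^ (t'+1)
        + A * (A-1) ^ (t'+1) * (A ^ (t'+1) - γ ^ (t'+1)) := by ring
  linarith

/-- Theorem 4: `ξ_{n,m} ≤ 1 - (m-1)/n^{⌈log_n m⌉}`, where `⌈log_n m⌉ = Nat.clog n m`
is the least `k` with `n^k ≥ m`. -/
theorem stmt9 (n m : ℕ) (hn : 2 ≤ n) (hm : 1 ≤ m) :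
    xi n m ≤ 1 - ((m : ℝ) - 1) / (n : ℝ) ^ Nat.clog n m := by
  set k := max (Nat.clog n m) 1 with hkdef
  have hk : 1 ≤ k := le_max_right _ _
  have hmK : m ≤ n ^ k := by
    rcases eq_or_lt_of_le hm with h1 | h2
    · rw [← h1]; exact Nat.one_le_pow _ _ (by omega)
    · exact le_trans (Nat.le_pow_clog (by omega) m)
        (Nat.pow_le_pow_right (by omega) (le_max_left _ _))
  have hK2 : 2 ≤ n ^ k := le_trans hn (by
    calc n = n ^ 1 := (pow_one n).symm
      _ ≤ n ^ k := Nat.pow_le_pow_right (by omega) hk)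
  have hcK : m - 1 < n ^ k := by omega
  -- the target bound dominates (K - c)/K
  have hBineq : ((n ^ k : ℕ) : ℝ) ≠ 0 := by
    have : (0:ℕ) < n ^ k := by omega
    exact_mod_cast this.ne'
  have hbound : (((n ^ k : ℕ) : ℝ) - ((m - 1 : ℕ) : ℝ)) / ((n ^ k : ℕ) : ℝ)
      ≤ 1 - ((m : ℝ) - 1) / (n : ℝ) ^ Nat.clog n m := by
    rcases eq_or_lt_of_le hm with h1 | h2
    · -- m = 1
      rw [← h1]
      norm_num
      have hn0 : (0:ℝ) < (n:ℝ) := by exact_mod_cast (by omega : 0 < n)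
      rw [div_self (show ((n:ℝ)) ^ k ≠ 0 by positivity)]
    · -- m ≥ 2 : k = clog n m
      have hclog : 1 ≤ Nat.clog n m := by
        by_contra hcl
        have h0 : Nat.clog n m = 0 := by omega
        have := Nat.le_pow_clog (show 1 < n by omega) m
        rw [h0, pow_zero] at this
        omega
      have hkc : k = Nat.clog n m := by rw [hkdef, max_eq_left hclog]
      rw [hkc]
      have hms : ((m - 1 : ℕ) : ℝ) = (m : ℝ) - 1 := by
        push_cast [Nat.cast_sub hm]; ring
      have hpc : ((n ^ Nat.clog n m : ℕ) : ℝ) = (n : ℝ) ^ Nat.clog n m := by push_cast; ring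
      rw [hkc] at hBineq
      rw [hms, hpc, sub_div, div_self (by rw [hpc] at hBineq; exact hBineq)]
  -- bddBelow and nonempty
  set S := {r : ℝ | ∃ L : Fin m → ℕ, (∀ i, 1 ≤ L i) ∧ (UD n L).Nonempty ∧ r = rho n L}
    with hSdef
  have hBdd : BddBelow S := by
    refine ⟨0, ?_⟩
    rintro r ⟨L, -, -, rfl⟩
    rw [rho]
    positivity
  have hSne : S.Nonempty := by
    obtain ⟨L, h1, h2, -⟩ := keyCount n m k 1 hn hm hk le_rfl hmK
    exact ⟨rho n L, L, h1, h2, rfl⟩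
  rw [xi]
  rw [Real.sInf_le_iff hBdd hSne]
  intro ε hε
  set r : ℝ := (((n ^ k : ℕ) : ℝ) - 1) / ((n ^ k : ℕ) : ℝ) with hrdef
  have hr0 : 0 ≤ r := by
    apply div_nonneg _ (Nat.cast_nonneg _)
    have : (1:ℝ) ≤ ((n ^ k : ℕ) : ℝ) := by exact_mod_cast (by omega : 1 ≤ n ^ k)
    linarith
  have hr1 : r < 1 := by
    rw [hrdef, div_lt_one (by exact_mod_cast (by omega : 0 < n ^ k))]
    linarith
  obtain ⟨t₀, ht₀⟩ := exists_pow_lt_of_lt_one hε hr1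
  set t := max t₀ 1 with htdef
  have ht1 : 1 ≤ t := le_max_right _ _
  obtain ⟨L, hL1, hLne, hLrho⟩ := keyCount n m k t hn hm hk ht1 hmK
  refine ⟨rho n L, ⟨L, hL1, hLne, rfl⟩, ?_⟩
  have harith := arith (n ^ k) (m - 1) t hK2 hcK ht1
  have hrt : r ^ t < ε :=
    lt_of_le_of_lt (pow_le_pow_of_le_one hr0 hr1.le (le_max_left _ _)) ht₀
  have hchain : rho n L ≤ (((n ^ k : ℕ) : ℝ) - ((m-1 : ℕ) : ℝ)) / ((n ^ k : ℕ) : ℝ) + r ^ t := by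
    calc rho n L ≤ _ := hLrho
      _ ≤ _ := harith
      _ = (((n ^ k : ℕ) : ℝ) - ((m-1 : ℕ) : ℝ)) / ((n ^ k : ℕ) : ℝ) + r ^ t := by rw [hrdef]
  calc rho n L ≤ _ := hchain
    _ ≤ (1 - ((m : ℝ) - 1) / (n : ℝ) ^ Nat.clog n m) + r ^ t := by
        exact add_le_add_left hbound _
    _ < (1 - ((m : ℝ) - 1) / (n : ℝ) ^ Nat.clog n m) + ε := add_lt_add_right hrt _
end

section
/- The sequence (ξ_{n,n})_{n ≥ 2} converges to 0 as n → ∞; in fact ξ_{n,n} ≤ 1/n for every n ≥ 2. -/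
open Finset Filter Topology

section List4UD
open List

section Key
variable {X I : Type*} [DecidableEq X]

private lemma takeWhile_append_of_mem {a : X} {l r : List X} (h : a ∈ l) :
    ((l ++ r).takeWhile (fun c => decide (c ≠ a))) = l.takeWhile (fun c => decide (c ≠ a)) := by
  induction l with
  | nil => simp at h
  | cons c l' ih =>
    by_cases hc : c = a
    · subst hc; simp
    · have h' : a ∈ l' := by
        rcases List.mem_cons.1 h with h | h
        · exact absurd h.symm hc
        · exact h
      rw [List.cons_append, List.takeWhile_cons, List.takeWhile_cons, ih h']

private def pp (a : X) (f : List X) : ℕ := (f.takeWhile (fun c => decide (c ≠ a))).length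

variable {v : I → List X} {ℓ : I} {a : X}

private lemma subP (h1 : ∀ i, i ≠ ℓ → ∃ c, v i = [c] ∧ c ≠ a) (h3 : a ∈ v ℓ) :
    ∀ (s' : List I) (i : I), a ∈ (((i :: s').map v).flatten) →
      (i = ℓ → pp a (((i :: s').map v).flatten) = pp a (v ℓ)) ∧
      (i ≠ ℓ → pp a (v ℓ) < pp a (((i :: s').map v).flatten)) := by
  intro s'
  induction s' with
  | nil =>
    intro i ha
    constructor
    · intro hi; subst hi; simp [pp]
    · intro hi
      rcases h1 i hi with ⟨c, hc, hca⟩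
      simp [hc] at ha
      exact absurd ha.symm hca
  | cons i1 s'' ih =>
    intro i ha
    constructor
    · intro hi; subst hi
      simp only [List.map_cons, List.flatten_cons]
      unfold pp
      rw [takeWhile_append_of_mem h3]
    · intro hi
      rcases h1 i hi with ⟨c, hc, hca⟩
      have ha' : a ∈ (((i1 :: s'').map v).flatten) := by
        simp only [List.map_cons, List.flatten_cons, hc] at ha ⊢
        rcases List.mem_append.1 ha with h | h
        · simp at h; exact absurd h.symm hca
        · exact h
      have H := ih i1 ha'
      have hrest : pp a (v ℓ) ≤ pp a (((i1 :: s'').map v).flatten) := by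
        by_cases h : i1 = ℓ
        · exact le_of_eq (H.1 h).symm
        · exact le_of_lt (H.2 h)
      have hstep : pp a (((i :: i1 :: s'').map v).flatten)
          = pp a (((i1 :: s'').map v).flatten) + 1 := by
        simp only [List.map_cons, List.flatten_cons, hc]
        unfold pp
        simp [List.takeWhile_cons, hca]
      omega

private lemma keyUD (h1 : ∀ i, i ≠ ℓ → ∃ c, v i = [c] ∧ c ≠ a)
    (h2 : Function.Injective v) (h3 : a ∈ v ℓ) :
    ∀ s t : List I, s ≠ [] → t ≠ [] → (s.map v).flatten = (t.map v).flatten → s = t := by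
  have hne : ∀ i, v i ≠ [] := by
    intro i
    by_cases h : i = ℓ
    · subst h; exact List.ne_nil_of_mem h3
    · rcases h1 i h with ⟨c, hc, _⟩; simp [hc]
  have hfl : ∀ s : List I, (s.map v).flatten = [] → s = [] := by
    intro s hs
    cases s with
    | nil => rfl
    | cons i s' =>
      simp only [List.map_cons, List.flatten_cons] at hs
      exact absurd (List.append_eq_nil_iff.1 hs).1 (hne i)
  intro s
  induction s with
  | nil => intro t hs _ _; exact absurd rfl hs
  | cons i s' ih =>
    intro t _ ht hf
    cases t with
    | nil => exact absurd rfl ht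
    | cons i' t' =>
      have hii : i = i' := by
        by_cases hi : i = ℓ <;> by_cases hi' : i' = ℓ
        · rw [hi, hi']
        · exfalso
          have haS : a ∈ (((i :: s').map v).flatten) := by
            simp only [List.map_cons, List.flatten_cons, hi]
            exact List.mem_append.2 (Or.inl h3)
          have haT : a ∈ (((i' :: t').map v).flatten) := by rw [← hf]; exact haS
          have H1 := (subP h1 h3 s' i haS).1 hi
          have H2 := (subP h1 h3 t' i' haT).2 hi'
          rw [hf] at H1
          omega
        · exfalso
          have haT : a ∈ (((i' :: t').map v).flatten) := by
            simp only [List.map_cons, List.flatten_cons, hi']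
            exact List.mem_append.2 (Or.inl h3)
          have haS : a ∈ (((i :: s').map v).flatten) := by rw [hf]; exact haT
          have H1 := (subP h1 h3 t' i' haT).1 hi'
          have H2 := (subP h1 h3 s' i haS).2 hi
          rw [hf] at H2
          omega
        · rcases h1 i hi with ⟨c, hc, _⟩
          rcases h1 i' hi' with ⟨c', hc', _⟩
          apply h2
          rw [hc, hc']
          simp only [List.map_cons, List.flatten_cons, hc, hc',
            List.singleton_append] at hf
          rw [(List.cons_eq_cons.1 hf).1]
      subst hii
      have hf' : (s'.map v).flatten = (t'.map v).flatten := by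
        simp only [List.map_cons, List.flatten_cons] at hf
        exact List.append_cancel_left hf
      by_cases hs' : s' = []
      · subst hs'
        have : t' = [] := hfl t' (by rw [← hf']; rfl)
        rw [this]
      · have ht' : t' ≠ [] := by
          intro h; subst h
          exact hs' (hfl s' (by rw [hf']; rfl))
        rw [ih t' hs' ht' hf']

end Key

end List4UD

section Constr
variable (n k : ℕ)

def lastI (h : 0 < n) : Fin n := ⟨n - 1, Nat.sub_lt h Nat.one_pos⟩

def LL : Fin n → ℕ := fun i => if (i : ℕ) = n - 1 then k + 1 else 1

lemma LL_pos : ∀ i, 1 ≤ LL n k i := by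
  intro i; unfold LL; split <;> omega

def mkCode (e : Fin n → Fin n) (w : Fin (k + 1) → Fin n) : Fin n → List (Fin n) :=
  fun i => if (i : ℕ) = n - 1 then List.ofFn (fun t => e (w t)) else [e i]

variable {n k}

lemma codes_finite {m : ℕ} (L : Fin m → ℕ) :
    {v : Fin m → List (Fin n) | ∀ i, (v i).length = L i}.Finite := by
  apply (Set.Finite.pi (fun i => List.finite_length_eq (Fin n) (L i))).subset
  intro v hv
  simp only [Set.mem_pi, Set.mem_univ, Set.mem_setOf_eq, forall_true_left]
  exact fun i => hv i

lemma UD_finite (L : Fin n → ℕ) : (UD n L).Finite :=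
  (codes_finite L).subset (fun _ hv => hv.1)

lemma mkCode_mem_UD (hn : 2 ≤ n) (e : Fin n ≃ Fin n) (w : Fin (k + 1) → Fin n)
    (hw : ∃ t, w t = lastI n (by omega)) :
    mkCode n k e w ∈ UD n (LL n k) := by
  have h0 : 0 < n := by omega
  set ℓ := lastI n h0 with hℓ
  have hℓc : (ℓ : ℕ) = n - 1 := rfl
  constructor
  · intro i
    unfold mkCode LL
    split <;> simp
  · have h3 : e ℓ ∈ mkCode n k e w ℓ := by
      unfold mkCode
      rw [if_pos hℓc]
      obtain ⟨t, ht⟩ := hw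
      exact (List.mem_ofFn).2 ⟨t, by show e (w t) = e ℓ; rw [ht]⟩
    have hsing : ∀ i, i ≠ ℓ → mkCode n k e w i = [e i] := by
      intro i hi
      have hic : (i : ℕ) ≠ n - 1 := by
        intro h; exact hi (Fin.ext (h.trans hℓc.symm))
      unfold mkCode; rw [if_neg hic]
    have h1 : ∀ i, i ≠ ℓ → ∃ c, mkCode n k e w i = [c] ∧ c ≠ e ℓ := by
      intro i hi
      exact ⟨e i, hsing i hi, fun h => hi (e.injective h)⟩
    have h2 : Function.Injective (mkCode n k e w) := by
      intro i j hij
      by_cases hi : i = ℓ <;> by_cases hj : j = ℓ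
      · rw [hi, hj]
      · exfalso
        obtain ⟨c, hc, hca⟩ := h1 j hj
        have h3' : e ℓ ∈ mkCode n k e w j := by rw [← hij, hi]; exact h3
        rw [hc] at h3'
        simp at h3'
        exact hca h3'.symm
      · exfalso
        obtain ⟨c, hc, hca⟩ := h1 i hi
        have h3' : e ℓ ∈ mkCode n k e w i := by rw [hij, hj]; exact h3
        rw [hc] at h3'
        simp at h3'
        exact hca h3'.symm
      · rw [hsing i hi, hsing j hj] at hij
        simp only [List.cons.injEq] at hij
        exact e.injective hij.1
    exact keyUD h1 h2 h3

end Constr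

section Counting
variable {n k : ℕ}

lemma card_words (h0 : 0 < n) :
    Fintype.card {w : Fin (k + 1) → Fin n // ∃ t, w t = lastI n h0} =
      n ^ (k + 1) - (n - 1) ^ (k + 1) := by
  set a := lastI n h0 with ha
  have hsub : Fintype.card {x : Fin n // x ≠ a} = n - 1 := by
    rw [Fintype.card_subtype_compl]
    simp [Fintype.card_subtype_eq]
  have e1 : Fintype.card {w : Fin (k + 1) → Fin n // ∀ t, w t ≠ a} = (n - 1) ^ (k + 1) := by
    let E : {w : Fin (k + 1) → Fin n // ∀ t, w t ≠ a} ≃ (Fin (k + 1) → {x : Fin n // x ≠ a}) :=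
      { toFun := fun w t => ⟨w.1 t, w.2 t⟩
        invFun := fun f => ⟨fun t => (f t).1, fun t => (f t).2⟩
        left_inv := fun w => rfl
        right_inv := fun f => rfl }
    rw [Fintype.card_congr E, Fintype.card_fun, hsub, Fintype.card_fin]
  have hiff : ∀ w : Fin (k + 1) → Fin n, (∃ t, w t = a) ↔ ¬ (∀ t, w t ≠ a) := by
    intro w
    push_neg
    rfl
  rw [Fintype.card_congr (Equiv.subtypeEquivRight hiff), Fintype.card_subtype_compl, e1,
    Fintype.card_fun, Fintype.card_fin, Fintype.card_fin]

lemma UD_lower (hn : 2 ≤ n) :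
    n.factorial * (n ^ (k + 1) - (n - 1) ^ (k + 1)) ≤ (UD n (LL n k)).ncard := by
  have h0 : 0 < n := by omega
  haveI := (UD_finite (LL n k)).to_subtype
  let Ψ : (Equiv.Perm (Fin n)) × {w : Fin (k + 1) → Fin n // ∃ t, w t = lastI n h0} →
      ↥(UD n (LL n k)) :=
    fun p => ⟨mkCode n k p.1 p.2.1, mkCode_mem_UD hn p.1 p.2.1 p.2.2⟩
  have hΨ : Function.Injective Ψ := by
    rintro ⟨e, w, hw⟩ ⟨e', w', hw'⟩ h
    have hv : mkCode n k e w = mkCode n k e' w' := congrArg Subtype.val h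
    have hsing : ∀ i : Fin n, (i : ℕ) ≠ n - 1 → e i = e' i := by
      intro i hi
      have hc := congrFun hv i
      unfold mkCode at hc
      rw [if_neg hi, if_neg hi] at hc
      simpa using hc
    have hlast : e (lastI n h0) = e' (lastI n h0) := by
      by_contra hne
      obtain ⟨j, hj⟩ := e.surjective (e' (lastI n h0))
      have hjne : (j : ℕ) ≠ n - 1 := by
        intro hcontra
        apply hne
        rw [show j = lastI n h0 from Fin.ext hcontra] at hj
        rw [hj]
      have h5 : e' j = e' (lastI n h0) := by rw [← hsing j hjne, hj]
      exact hjne (congrArg Fin.val (e'.injective h5))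
    have he : e = e' := by
      apply Equiv.ext
      intro i
      by_cases hi : (i : ℕ) = n - 1
      · rw [show i = lastI n h0 from Fin.ext hi]; exact hlast
      · exact hsing i hi
    have hword : w = w' := by
      have hc := congrFun hv (lastI n h0)
      unfold mkCode at hc
      have hcond : ((lastI n h0 : Fin n) : ℕ) = n - 1 := rfl
      rw [if_pos hcond, if_pos hcond] at hc
      have h2 := List.ofFn_injective hc
      funext t
      have h3 := congrFun h2 t
      rw [he] at h3
      exact e'.injective h3
    simp only [Prod.mk.injEq]
    exact ⟨he, Subtype.ext hword⟩
  calc n.factorial * (n ^ (k + 1) - (n - 1) ^ (k + 1))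
      = Fintype.card ((Equiv.Perm (Fin n)) × {w : Fin (k + 1) → Fin n // ∃ t, w t = lastI n h0}) := by
        rw [Fintype.card_prod, Fintype.card_perm, Fintype.card_fin, card_words h0]
    _ = Nat.card ((Equiv.Perm (Fin n)) × {w : Fin (k + 1) → Fin n // ∃ t, w t = lastI n h0}) :=
        (Nat.card_eq_fintype_card).symm
    _ ≤ Nat.card ↥(UD n (LL n k)) := Nat.card_le_card_of_injective Ψ hΨ
    _ = (UD n (LL n k)).ncard := Nat.card_coe_set_eq _

end Counting

section PRside
variable {n k : ℕ}

lemma PR_upper (hn : 2 ≤ n) :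
    (PR n (LL n k)).ncard ≤ n.factorial * n ^ k := by
  have h0 : 0 < n := by omega
  letI : Inhabited (Fin n) := ⟨⟨0, h0⟩⟩
  have hℓc : ((lastI n h0 : Fin n) : ℕ) = n - 1 := rfl
  have hsing : ∀ v, v ∈ PR n (LL n k) → ∀ i : Fin n, i ≠ lastI n h0 → v i = [(v i).headI] := by
    intro v hv i hi
    have hlen : (v i).length = 1 := by
      have h1 := hv.1 i
      unfold LL at h1
      rwa [if_neg (show ¬ (i:ℕ) = n - 1 from fun hcontra => hi (Fin.ext (hcontra.trans hℓc.symm)))] at h1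
    obtain ⟨c, hc⟩ := List.length_eq_one_iff.1 hlen
    rw [hc]; rfl
  have hlastlen : ∀ v, v ∈ PR n (LL n k) → (v (lastI n h0)).length = k + 1 := by
    intro v hv
    have h1 := hv.1 (lastI n h0)
    unfold LL at h1
    rwa [if_pos hℓc] at h1
  have hdec : ∀ v, v ∈ PR n (LL n k) → ∀ j, v j = (v j).headI :: (v j).tail := by
    intro v hv j
    have hne : v j ≠ [] := hv.2.2.1 j
    cases hval : v j with
    | nil => exact absurd hval hne
    | cons c t => rfl
  have hinj : ∀ v, ∀ hv : v ∈ PR n (LL n k), Function.Injective (fun i : Fin n => (v i).headI) := by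
    intro v hv i j hij
    simp only at hij
    by_contra hne
    by_cases hi : i = lastI n h0
    · have hj : j ≠ lastI n h0 := fun h => hne (hi.trans h.symm)
      apply hv.2.2.2 j i (fun h => hne h.symm)
      rw [hsing v hv j hj, ← hij]
      exact ⟨(v i).tail, (hdec v hv i).symm⟩
    · apply hv.2.2.2 i j hne
      rw [hsing v hv i hi, hij]
      exact ⟨(v j).tail, (hdec v hv j).symm⟩
  let Φ : ↥(PR n (LL n k)) → (Fin n ↪ Fin n) × (List.Vector (Fin n) k) :=
    fun p => (⟨fun i => (p.1 i).headI, hinj p.1 p.2⟩,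
      ⟨(p.1 (lastI n h0)).tail, by
        simp [List.length_tail, hlastlen p.1 p.2]⟩)
  have hΦ : Function.Injective Φ := by
    rintro ⟨v, hv⟩ ⟨v', hv'⟩ h
    obtain ⟨h1, h2⟩ := Prod.mk.inj h
    have hheads : ∀ i, (v i).headI = (v' i).headI := fun i =>
      congrFun (congrArg (fun (f : Fin n ↪ Fin n) => (f : Fin n → Fin n)) h1) i
    have htails : (v (lastI n h0)).tail = (v' (lastI n h0)).tail := congrArg Subtype.val h2
    apply Subtype.ext
    funext i
    show v i = v' i
    by_cases hi : i = lastI n h0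
    · rw [hdec v hv i, hdec v' hv' i, hheads i, hi, htails]
    · rw [hsing v hv i hi, hsing v' hv' i hi, hheads i]
  haveI : Finite ((Fin n ↪ Fin n) × (List.Vector (Fin n) k)) := inferInstance
  calc (PR n (LL n k)).ncard = Nat.card ↥(PR n (LL n k)) := (Nat.card_coe_set_eq _).symm
    _ ≤ Nat.card ((Fin n ↪ Fin n) × (List.Vector (Fin n) k)) :=
        Nat.card_le_card_of_injective Φ hΦ
    _ = n.factorial * n ^ k := by
        rw [Nat.card_eq_fintype_card, Fintype.card_prod, Fintype.card_embedding_eq, card_vector]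
        simp [Nat.descFactorial_self]

end PRside

section Analysis
open Filter Topology
variable {n k : ℕ}

lemma Qpos (hn : 2 ≤ n) : 0 < n ^ (k + 1) - (n - 1) ^ (k + 1) := by
  have h : (n - 1) ^ (k + 1) < n ^ (k + 1) := Nat.pow_lt_pow_left (by omega) (by omega)
  omega

lemma rho_le (hn : 2 ≤ n) :
    rho n (LL n k) ≤ (n : ℝ) ^ k / ((n : ℝ) ^ (k + 1) - ((n : ℝ) - 1) ^ (k + 1)) := by
  have hQ : 0 < n ^ (k + 1) - (n - 1) ^ (k + 1) := Qpos hn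
  have hU := UD_lower (k := k) hn
  have hP := PR_upper (k := k) hn
  have hfac : 0 < n.factorial := n.factorial_pos
  have hcast : ((n ^ (k + 1) - (n - 1) ^ (k + 1) : ℕ) : ℝ)
      = (n : ℝ) ^ (k + 1) - ((n : ℝ) - 1) ^ (k + 1) := by
    have h1 : (n - 1) ^ (k + 1) ≤ n ^ (k + 1) := by omega
    rw [Nat.cast_sub h1]
    push_cast [Nat.cast_sub (by omega : 1 ≤ n)]
    ring
  have hprodpos : (0 : ℝ) < ((n.factorial * (n ^ (k + 1) - (n - 1) ^ (k + 1)) : ℕ) : ℝ) := by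
    exact_mod_cast Nat.mul_pos hfac hQ
  unfold rho
  calc ((PR n (LL n k)).ncard : ℝ) / ((UD n (LL n k)).ncard : ℝ)
      ≤ ((n.factorial * n ^ k : ℕ) : ℝ) / ((n.factorial * (n ^ (k + 1) - (n - 1) ^ (k + 1)) : ℕ) : ℝ) := by
        apply div_le_div₀ (by positivity) (by exact_mod_cast hP) hprodpos (by exact_mod_cast hU)
    _ = (n : ℝ) ^ k / (((n ^ (k + 1) - (n - 1) ^ (k + 1) : ℕ)) : ℝ) := by
        push_cast
        rw [mul_div_mul_left _ _ (by positivity : (n.factorial : ℝ) ≠ 0)]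
    _ = (n : ℝ) ^ k / ((n : ℝ) ^ (k + 1) - ((n : ℝ) - 1) ^ (k + 1)) := by rw [hcast]

lemma UD_nonempty (hn : 2 ≤ n) : (UD n (LL n k)).Nonempty := by
  apply Set.nonempty_of_ncard_ne_zero
  have hU := UD_lower (k := k) hn
  have hpos := Nat.mul_pos n.factorial_pos (Qpos (k := k) hn)
  omega

lemma xi_le (hn : 2 ≤ n) (k : ℕ) :
    xi n n ≤ (n : ℝ) ^ k / ((n : ℝ) ^ (k + 1) - ((n : ℝ) - 1) ^ (k + 1)) := by
  have hmem : rho n (LL n k) ∈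
      {r : ℝ | ∃ L : Fin n → ℕ, (∀ i, 1 ≤ L i) ∧ (UD n L).Nonempty ∧ r = rho n L} :=
    ⟨LL n k, LL_pos n k, UD_nonempty hn, rfl⟩
  have hbdd : BddBelow {r : ℝ | ∃ L : Fin n → ℕ, (∀ i, 1 ≤ L i) ∧ (UD n L).Nonempty ∧ r = rho n L} := by
    refine ⟨0, fun r hr => ?_⟩
    obtain ⟨L, -, -, rfl⟩ := hr
    unfold rho
    positivity
  exact (csInf_le hbdd hmem).trans (rho_le hn)

lemma tendsto_c (hn : 2 ≤ n) :
    Tendsto (fun k : ℕ => (n : ℝ) ^ k / ((n : ℝ) ^ (k + 1) - ((n : ℝ) - 1) ^ (k + 1)))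
      atTop (𝓝 (1 / (n : ℝ))) := by
  have hnR : (2 : ℝ) ≤ (n : ℝ) := by exact_mod_cast hn
  have hn0 : (0 : ℝ) < (n : ℝ) := by linarith
  have hr0 : (0 : ℝ) ≤ ((n : ℝ) - 1) / (n : ℝ) := by
    apply div_nonneg <;> linarith
  have hr1 : ((n : ℝ) - 1) / (n : ℝ) < 1 := by
    rw [div_lt_one hn0]; linarith
  have h0 : Tendsto (fun k : ℕ => (((n : ℝ) - 1) / (n : ℝ)) ^ k) atTop (𝓝 0) :=
    tendsto_pow_atTop_nhds_zero_of_lt_one hr0 hr1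
  have hden : Tendsto (fun k : ℕ => (n : ℝ) - ((n : ℝ) - 1) * (((n : ℝ) - 1) / (n : ℝ)) ^ k)
      atTop (𝓝 (n : ℝ)) := by
    have h2 := (h0.const_mul ((n : ℝ) - 1)).const_sub (n : ℝ)
    simpa using h2
  have hlim : Tendsto (fun k : ℕ => 1 / ((n : ℝ) - ((n : ℝ) - 1) * (((n : ℝ) - 1) / (n : ℝ)) ^ k))
      atTop (𝓝 (1 / (n : ℝ))) :=
    tendsto_const_nhds.div hden (ne_of_gt hn0)
  apply hlim.congr
  intro k
  have hd : (n : ℝ) - ((n : ℝ) - 1) * (((n : ℝ) - 1) / (n : ℝ)) ^ k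
      = ((n : ℝ) ^ (k + 1) - ((n : ℝ) - 1) ^ (k + 1)) / (n : ℝ) ^ k := by
    rw [div_pow]
    field_simp
    ring
  rw [hd, one_div_div]

end Analysis


/-- Corollary 2: `ξ_{n,n} ≤ 1/n` for every `n ≥ 2`, and `ξ_{n,n} → 0` as `n → ∞`. -/
theorem stmt10 :
    (∀ n : ℕ, 2 ≤ n → xi n n ≤ 1 / (n : ℝ)) ∧
      Filter.Tendsto (fun n : ℕ => xi n n) Filter.atTop (𝓝 0) := by
  have h1 : ∀ n : ℕ, 2 ≤ n → xi n n ≤ 1 / (n : ℝ) := by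
    intro n hn
    exact ge_of_tendsto (tendsto_c hn) (Filter.Eventually.of_forall (fun k => xi_le hn k))
  refine ⟨h1, ?_⟩
  have hlow : ∀ n : ℕ, 0 ≤ xi n n := by
    intro n
    apply Real.sInf_nonneg
    rintro r ⟨L, -, -, rfl⟩
    unfold rho
    positivity
  apply tendsto_of_tendsto_of_tendsto_of_le_of_le' tendsto_const_nhds
    tendsto_one_div_atTop_nhds_zero_nat
  · exact Filter.Eventually.of_forall hlow
  · filter_upwards [Filter.eventually_ge_atTop 2] with n hn using h1 n hn
end

section
/- For all integers n ≥ 2 and m ≥ 3, the strict inequality ϖ_{n,m} > 1 − (m−1)/n holds, where ϖ_{n,m} := ∏_{i=1}^{m−1} (1 − (1 − n^{−i})/(n−1)). -/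
open Finset Filter Topology

lemma varpi_fac_pos (n : ℕ) (hn : 2 ≤ n) (i : ℕ) :
    0 < 1 - (1 - 1 / (n : ℝ) ^ i) / ((n : ℝ) - 1) := by
  have hn2 : (2:ℝ) ≤ (n:ℝ) := by exact_mod_cast hn
  have hpow : (0:ℝ) < 1 / (n:ℝ) ^ i := by positivity
  rw [sub_pos]
  exact (div_lt_one (by linarith)).mpr (by linarith)

lemma varpi_key (n : ℕ) (hn : 2 ≤ n) (k : ℕ) (hk : 2 ≤ k) (hkn : k ≤ n) :
    1 - (k : ℝ) / (n : ℝ) <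
      ∏ i ∈ Finset.Icc 1 k, (1 - (1 - 1 / (n : ℝ) ^ i) / ((n : ℝ) - 1)) := by
  have hn2 : (2:ℝ) ≤ (n:ℝ) := by exact_mod_cast hn
  have hn0 : (0:ℝ) < (n:ℝ) := by linarith
  induction k, hk using Nat.le_induction with
  | base =>
      have : Finset.Icc 1 2 = {1, 2} := by decide
      rw [this, Finset.prod_insert (by decide), Finset.prod_singleton]
      have h1 : ((n:ℝ))^1 = (n:ℝ) := by ring
      have h2 : ((n:ℝ))^2 = (n:ℝ)*(n:ℝ) := by ring
      rw [h1, h2]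
      have hne : (n:ℝ) ≠ 0 := ne_of_gt hn0
      have hne1 : (n:ℝ) - 1 ≠ 0 := by intro h; nlinarith
      have hprod : (1 - (1 - 1 / (n:ℝ)) / ((n:ℝ) - 1)) *
          (1 - (1 - 1 / ((n:ℝ)*(n:ℝ))) / ((n:ℝ) - 1))
          = ((n:ℝ)*(n:ℝ)*(n:ℝ) - 2*((n:ℝ)*(n:ℝ)) + 1) / ((n:ℝ)*(n:ℝ)*(n:ℝ)) := by
        field_simp
        ring
      have hl : 1 - ((2:ℕ):ℝ)/(n:ℝ) = ((n:ℝ)-2)/(n:ℝ) := by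
        push_cast; field_simp
      rw [hl, hprod, div_lt_div_iff₀ hn0 (by positivity)]
      nlinarith
  | succ k hk ih =>
      have hkn' : k ≤ n := le_trans (Nat.le_succ k) hkn
      have ih' := ih hkn'
      rw [Finset.prod_Icc_succ_top (by omega : 1 ≤ k + 1)]
      set P := ∏ i ∈ Finset.Icc 1 k, (1 - (1 - 1 / (n : ℝ) ^ i) / ((n : ℝ) - 1)) with hP
      set a := (1 - 1 / (n : ℝ) ^ (k+1)) / ((n : ℝ) - 1) with ha
      have hfa : 0 < 1 - a := varpi_fac_pos n hn (k+1)
      have hkr : (k:ℝ) ≤ (n:ℝ) := by exact_mod_cast hkn'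
      have hk1 : (1:ℝ) ≤ (k:ℝ) := by exact_mod_cast (by omega : 1 ≤ k)
      have hbase : (0:ℝ) ≤ 1 - (k:ℝ)/(n:ℝ) := by
        rw [sub_nonneg, div_le_one hn0]; exact hkr
      have hple : (1:ℝ) ≤ (n:ℝ)^(k+1) := one_le_pow₀ (by linarith)
      have ha0 : 0 ≤ a := by
        apply div_nonneg _ (by linarith)
        have : 1 / (n:ℝ)^(k+1) ≤ 1 := by
          rw [div_le_one (by positivity)]; exact hple
        linarith
      have haa : a * ((n:ℝ) - 1) ≤ 1 := by
        rw [ha, div_mul_cancel₀ _ (by linarith : (n:ℝ) - 1 ≠ 0)]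
        have : 0 < 1 / (n:ℝ)^(k+1) := by positivity
        linarith
      have step1 : (1 - (k:ℝ)/(n:ℝ)) * (1 - a) < P * (1 - a) :=
        mul_lt_mul_of_pos_right ih' hfa
      have hank : a * ((n:ℝ) - (k:ℝ)) ≤ 1 := by nlinarith
      have step2 : 1 - ((k:ℝ)+1)/(n:ℝ) ≤ (1 - (k:ℝ)/(n:ℝ)) * (1 - a) := by
        have hexp : (1 - (k:ℝ)/(n:ℝ)) * (1 - a) - (1 - ((k:ℝ)+1)/(n:ℝ))
            = (1 - a*((n:ℝ)-(k:ℝ)))/(n:ℝ) := by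
          field_simp
          ring
        have hnn : 0 ≤ (1 - a*((n:ℝ)-(k:ℝ)))/(n:ℝ) :=
          div_nonneg (by linarith) hn0.le
        linarith
      push_cast
      calc 1 - ((k:ℝ)+1)/(n:ℝ) ≤ (1 - (k:ℝ)/(n:ℝ)) * (1 - a) := step2
        _ < P * (1 - a) := step1

/-- The inequality `ϖ_{n,m} > 1 - (m-1)/n` for `n ≥ 2`, `m ≥ 3`. -/
theorem stmt12 (n m : ℕ) (hn : 2 ≤ n) (hm : 3 ≤ m) :
    1 - ((m : ℝ) - 1) / (n : ℝ) < varpi n m := by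
  have hn2 : (2:ℝ) ≤ (n:ℝ) := by exact_mod_cast hn
  have hn0 : (0:ℝ) < (n:ℝ) := by linarith
  rw [varpi]
  by_cases h : m - 1 ≤ n
  · have hcast : ((m - 1 : ℕ) : ℝ) = (m:ℝ) - 1 := by
      push_cast [Nat.cast_sub (by omega : 1 ≤ m)]; ring
    have := varpi_key n hn (m-1) (by omega) h
    rw [hcast] at this
    exact this
  · have hpos : 0 < ∏ i ∈ Finset.Icc 1 (m - 1),
        (1 - (1 - 1 / (n : ℝ) ^ i) / ((n : ℝ) - 1)) :=
      Finset.prod_pos fun i _ => varpi_fac_pos n hn i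
    have hm1 : (n:ℝ) + 1 ≤ (m:ℝ) - 1 := by
      have : n + 2 ≤ m := by omega
      have := (Nat.cast_le (α := ℝ)).mpr this
      push_cast at this
      linarith
    have hq : 1 < ((m:ℝ) - 1)/(n:ℝ) := by
      rw [lt_div_iff₀ hn0]; linarith
    linarith
end

section
/- Let m ≥ 1 and n ≥ 2 be integers and let L = (a_1,…,a_s) be a finite sequence of positive integers with s ≤ m such that the Kraft sum σ_n(L) = Σ_{i=1}^s n^{−a_i} is strictly less than 1. Then σ_n(L) ≤ 1 − ς_{n,m}. -/
open Finset Filter Topology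

lemma geom_aux (n : ℕ) (hn : 2 ≤ n) (q : ℕ) :
    ∑ j ∈ Finset.Icc 1 q, ((n:ℝ)-1) * (1/(n:ℝ)^j) = 1 - 1/(n:ℝ)^q := by
  have hn0 : (0:ℝ) < (n:ℝ) := by positivity
  induction q with
  | zero => simp
  | succ q ih =>
    rw [Finset.sum_Icc_succ_top (by omega), ih]
    have h1 : ((n:ℝ))^q ≠ 0 := by positivity
    have h2 : ((n:ℝ)) ≠ 0 := by positivity
    field_simp
    ring

lemma varsigma_succ_le (n : ℕ) (hn : 2 ≤ n) (m : ℕ) :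
    varsigma n (m+1) ≤ varsigma n m := by
  have hk : 1 ≤ n - 1 := by omega
  set k := n - 1 with hkdef
  have hr : m % k < k := Nat.mod_lt _ (by omega)
  have hdm : k * (m / k) + m % k = m := Nat.div_add_mod m k
  have hn0 : (0:ℝ) < (n:ℝ) := by positivity
  by_cases hcase : m % k + 1 < k
  · have hmod : (m+1) % k = m % k + 1 := by
      conv_lhs => rw [← hdm]
      rw [add_assoc, Nat.mul_add_mod]
      exact Nat.mod_eq_of_lt hcase
    have hdiv : (m+1) / k = m / k := by
      conv_lhs => rw [← hdm]
      rw [add_assoc, Nat.mul_add_div (by omega)]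
      simp [Nat.div_eq_of_lt hcase]
    unfold varsigma
    rw [hmod, hdiv]
    rw [div_le_div_iff₀ (by positivity) (by positivity)]
    push_cast
    nlinarith [pow_pos hn0 (m/k+1)]
  · have hkk : m % k + 1 = k := by omega
    have hm1 : m + 1 = k * (m/k + 1) := by rw [Nat.mul_add, Nat.mul_one]; omega
    have hmod : (m+1) % k = 0 := by rw [hm1]; exact Nat.mul_mod_right _ _
    have hdiv : (m+1) / k = m / k + 1 := by rw [hm1]; exact Nat.mul_div_cancel_left _ (by omega)
    unfold varsigma
    rw [hmod, hdiv]
    have hrcast : ((m % k : ℕ) : ℝ) = (n:ℝ) - 2 := by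
      have : m % k = n - 2 := by omega
      rw [this]; push_cast [show 2 ≤ n from hn]; ring
    rw [hrcast]
    have hp : (0:ℝ) < (n:ℝ) ^ (m / k + 1) := by positivity
    rw [div_le_div_iff₀ (by positivity) hp]
    have : (n:ℝ) - ((0:ℕ):ℝ) = (n:ℝ) := by simp
    rw [this]
    have hpow : (n:ℝ) ^ (m / k + 1 + 1) = (n:ℝ) ^ (m / k + 1) * (n:ℝ) := by ring
    rw [hpow]
    have h2 : (2:ℝ) ≤ (n:ℝ) := by exact_mod_cast hn
    nlinarith [hp]

lemma varsigma_anti (n : ℕ) (hn : 2 ≤ n) {m m' : ℕ} (h : m ≤ m') :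
    varsigma n m' ≤ varsigma n m := by
  induction m' with
  | zero => simp_all
  | succ m' ih =>
    rcases Nat.lt_or_ge m (m'+1) with h1 | h1
    · exact le_trans (varsigma_succ_le n hn m') (ih (by omega))
    · have : m = m' + 1 := by omega
      subst this; rfl


lemma term_bd {x y cc dd : ℝ} (h : (cc - dd) * (x - y) ≤ 0) :
    cc * x ≤ dd * x + (cc - dd) * y := by nlinarith

lemma digit_bound (n m B : ℕ) (hn : 2 ≤ n) (c : ℕ → ℕ)
    (hB : m/(n-1) + 1 ≤ B)
    (hc : ∀ j, 1 ≤ j → c j ≤ n - 1)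
    (hsum : ∑ j ∈ Icc 1 B, c j ≤ m) :
    ∑ j ∈ Icc 1 B, (c j : ℝ) * (1 / (n:ℝ)^j) ≤ 1 - varsigma n m := by
  have hn0 : (0:ℝ) < (n:ℝ) := by positivity
  have h2 : (2:ℝ) ≤ (n:ℝ) := by exact_mod_cast hn
  set q := m / (n-1) with hq
  set r := m % (n-1) with hr
  have hrk : r < n - 1 := Nat.mod_lt _ (by omega)
  have hdm : (n-1) * q + r = m := Nat.div_add_mod m (n-1)
  set y : ℝ := 1 / (n:ℝ)^(q+1) with hy
  have hy0 : 0 < y := by positivity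
  set d : ℕ → ℝ := fun j => if j ≤ q then (n:ℝ)-1 else if j = q+1 then (r:ℝ) else 0 with hd
  -- termwise bound
  have hterm : ∀ j ∈ Icc 1 B, (c j : ℝ) * (1/(n:ℝ)^j) ≤ d j * (1/(n:ℝ)^j) + ((c j : ℝ) - d j) * y := by
    intro j hj
    simp only [mem_Icc] at hj
    apply term_bd
    rcases lt_trichotomy j (q+1) with hlt | heq | hgt
    · have hdj : d j = (n:ℝ)-1 := by simp [hd, (by omega : j ≤ q)]
      have hcj : (c j : ℝ) ≤ (n:ℝ) - 1 := by
        have := hc j hj.1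
        have : (c j : ℝ) ≤ ((n-1 : ℕ) : ℝ) := by exact_mod_cast this
        have hcast : ((n-1:ℕ):ℝ) = (n:ℝ) - 1 := by push_cast [show 1 ≤ n by omega]; ring
        linarith [hcast ▸ this]
      have hpow : (n:ℝ)^j ≤ (n:ℝ)^(q+1) := by
        apply pow_le_pow_right₀ (by linarith) (by omega)
      have hx : y ≤ 1/(n:ℝ)^j := by
        rw [hy]; apply one_div_le_one_div_of_le (by positivity) hpow
      rw [hdj]
      nlinarith
    · have hdj : d j = (r:ℝ) := by simp [hd, heq, (by omega : ¬ j ≤ q)]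
      have : (1/(n:ℝ)^j - y) = 0 := by rw [hy, heq]; ring
      rw [this, mul_zero]
    · have hdj : d j = 0 := by
        simp only [hd]
        rw [if_neg (by omega), if_neg (by omega)]
      have hpow : (n:ℝ)^(q+1) ≤ (n:ℝ)^j := by
        apply pow_le_pow_right₀ (by linarith) (by omega)
      have hx : 1/(n:ℝ)^j ≤ y := by
        rw [hy]; apply one_div_le_one_div_of_le (by positivity) hpow
      rw [hdj]
      have : (0:ℝ) ≤ (c j : ℝ) := by positivity
      nlinarith
  have hsum1 := Finset.sum_le_sum hterm
  -- compute the sum of d j * x j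
  have hsub : Icc 1 (q+1) ⊆ Icc 1 B := Finset.Icc_subset_Icc_right hB
  have hdx : ∑ j ∈ Icc 1 B, d j * (1/(n:ℝ)^j)
      = (1 - 1/(n:ℝ)^q) + (r:ℝ) * y := by
    rw [← Finset.sum_subset hsub (by
      intro x hx hnx
      simp only [mem_Icc] at hx hnx
      have h1 : ¬ x ≤ q := by omega
      have h2 : x ≠ q+1 := by omega
      simp [hd, h1, h2])]
    rw [Finset.sum_Icc_succ_top (Nat.le_add_left 1 q)]
    have : ∑ j ∈ Icc 1 q, d j * (1/(n:ℝ)^j) = ∑ j ∈ Icc 1 q, ((n:ℝ)-1) * (1/(n:ℝ)^j) := by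
      apply Finset.sum_congr rfl
      intro j hj
      simp only [mem_Icc] at hj
      simp [hd, hj.2]
    rw [this, geom_aux n hn q]
    have : d (q+1) = (r:ℝ) := by simp [hd]
    rw [this, hy]
  have hds : ∑ j ∈ Icc 1 B, d j = (m : ℝ) := by
    rw [← Finset.sum_subset hsub (by
      intro x hx hnx
      simp only [mem_Icc] at hx hnx
      have h1 : ¬ x ≤ q := by omega
      have h2 : x ≠ q+1 := by omega
      simp [hd, h1, h2])]
    rw [Finset.sum_Icc_succ_top (Nat.le_add_left 1 q)]
    have e1 : ∑ j ∈ Icc 1 q, d j = ∑ j ∈ Icc 1 q, ((n:ℝ)-1) := by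
      apply Finset.sum_congr rfl
      intro j hj
      simp only [mem_Icc] at hj
      simp [hd, hj.2]
    have e2 : d (q+1) = (r:ℝ) := by simp [hd]
    rw [e1, e2, Finset.sum_const, Nat.card_Icc]
    have : (q + 1 - 1) = q := Nat.add_sub_cancel _ _
    rw [this]
    have : (m:ℝ) = (((n-1) * q + r : ℕ) : ℝ) := congrArg (Nat.cast : ℕ → ℝ) hdm.symm
    rw [this]
    push_cast [show 1 ≤ n by omega]
    ring
  have hrhs : ∑ j ∈ Icc 1 B, (d j * (1/(n:ℝ)^j) + ((c j:ℝ) - d j) * y)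
      = ((1 - 1/(n:ℝ)^q) + (r:ℝ) * y) + ((∑ j ∈ Icc 1 B, (c j : ℝ)) - (m:ℝ)) * y := by
    rw [Finset.sum_add_distrib, hdx, ← Finset.sum_mul, Finset.sum_sub_distrib, hds]
  rw [hrhs] at hsum1
  have hcs : (∑ j ∈ Icc 1 B, (c j : ℝ)) ≤ (m:ℝ) := by
    exact_mod_cast Nat.cast_le.mpr hsum |>.trans_eq (by push_cast; ring) |>.trans_eq rfl
  have hfin : ((∑ j ∈ Icc 1 B, (c j : ℝ)) - (m:ℝ)) * y ≤ 0 := by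
    apply mul_nonpos_of_nonpos_of_nonneg (by linarith) (le_of_lt hy0)
  have hvs : 1 - varsigma n m = (1 - 1/(n:ℝ)^q) + (r:ℝ) * y := by
    unfold varsigma
    rw [← hq, ← hr, hy]
    have hq0 : ((n:ℝ))^q ≠ 0 := by positivity
    have hn0' : (n:ℝ) ≠ 0 := by positivity
    rw [pow_succ]
    field_simp
    ring
  rw [hvs]
  linarith






lemma kraft_multiset (n : ℕ) (hn : 2 ≤ n) :
    ∀ N : ℕ, ∀ M : Multiset ℕ, M.card ≤ N → (∀ a ∈ M, 1 ≤ a) →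
      (M.map fun a => 1/(n:ℝ)^a).sum < 1 →
      (M.map fun a => 1/(n:ℝ)^a).sum ≤ 1 - varsigma n M.card := by
  have hn0 : (0:ℝ) < (n:ℝ) := by positivity
  have h2 : (2:ℝ) ≤ (n:ℝ) := by exact_mod_cast hn
  intro N
  induction N with
  | zero =>
    intro M hcard _ _
    have : M = 0 := Multiset.card_eq_zero.mp (by omega)
    subst this
    simp only [Multiset.map_zero, Multiset.sum_zero, Multiset.card_zero]
    have : varsigma n 0 = 1 := by
      unfold varsigma
      simp only [Nat.zero_mod, Nat.zero_div, Nat.cast_zero, sub_zero, zero_add, pow_one]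
      exact div_self (by positivity)
    rw [this]; norm_num
  | succ N ih =>
    intro M hcard hpos hlt
    by_cases hmerge : ∃ a, 2 ≤ a ∧ n ≤ M.count a
    · obtain ⟨a, ha2, hna⟩ := hmerge
      have hrep : Multiset.replicate n a ≤ M := Multiset.le_count_iff_replicate_le.mp hna
      set M' : Multiset ℕ := (a-1) ::ₘ (M - Multiset.replicate n a) with hM'
      have hMsplit : M = (M - Multiset.replicate n a) + Multiset.replicate n a :=
        (tsub_add_cancel_of_le hrep).symm
      have hcardM : n ≤ M.card := le_trans (by simp) (Multiset.card_le_card hrep)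
      have hcard' : M'.card = M.card - n + 1 := by
        rw [hM', Multiset.card_cons, Multiset.card_sub hrep, Multiset.card_replicate]
      have hsum' : (M'.map fun a => 1/(n:ℝ)^a).sum = (M.map fun a => 1/(n:ℝ)^a).sum := by
        conv_rhs => rw [hMsplit]
        rw [hM', Multiset.map_cons, Multiset.sum_cons, Multiset.map_add, Multiset.sum_add,
          Multiset.map_replicate, Multiset.sum_replicate]
        have : n • (1/(n:ℝ)^a) = 1/(n:ℝ)^(a-1) := by
          rw [nsmul_eq_mul]
          have : a = (a-1) + 1 := by omega
          rw [this]
          have hpa : ((n:ℝ))^(a-1) ≠ 0 := by positivity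
          field_simp
          rw [Nat.add_sub_cancel]
          ring
        rw [this]
        ring
      have hpos' : ∀ b ∈ M', 1 ≤ b := by
        intro b hb
        rw [hM', Multiset.mem_cons] at hb
        rcases hb with hb | hb
        · omega
        · exact hpos b (Multiset.mem_of_le (tsub_le_self) hb)
      have hlt' : (M'.map fun a => 1/(n:ℝ)^a).sum < 1 := by rw [hsum']; exact hlt
      have hcc : M'.card ≤ N := by omega
      have := ih M' hcc hpos' hlt'
      rw [hsum'] at this
      refine this.trans ?_
      have : varsigma n M.card ≤ varsigma n M'.card :=
        varsigma_anti n hn (by omega)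
      linarith
    · push_neg at hmerge
      -- count of 1 is at most n-1 as well
      have hc1 : M.count 1 ≤ n - 1 := by
        by_contra hcon
        have hge : n ≤ M.count 1 := by omega
        have hrep : Multiset.replicate n 1 ≤ M := Multiset.le_count_iff_replicate_le.mp hge
        have hMsplit : M = (M - Multiset.replicate n 1) + Multiset.replicate n 1 :=
          (tsub_add_cancel_of_le hrep).symm
        have : (1:ℝ) ≤ (M.map fun a => 1/(n:ℝ)^a).sum := by
          conv_rhs => rw [hMsplit]
          rw [Multiset.map_add, Multiset.sum_add, Multiset.map_replicate, Multiset.sum_replicate]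
          have he : n • (1/(n:ℝ)^1) = 1 := by
            rw [nsmul_eq_mul, pow_one]
            field_simp
          rw [he]
          have : (0:ℝ) ≤ ((M - Multiset.replicate n 1).map fun a => 1/(n:ℝ)^a).sum := by
            apply Multiset.sum_nonneg
            intro x hx
            rw [Multiset.mem_map] at hx
            obtain ⟨b, _, rfl⟩ := hx
            positivity
          linarith
        linarith
      have hcall : ∀ j, 1 ≤ j → M.count j ≤ n - 1 := by
        intro j hj
        rcases Nat.lt_or_ge j 2 with hj2 | hj2
        · have : j = 1 := by omega
          subst this; exact hc1
        · have := hmerge j hj2; omega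
      -- set up the finset sum
      set B : ℕ := max (M.card/(n-1) + 1) (M.toFinset.sup id) with hB
      have hsubF : M.toFinset ⊆ Icc 1 B := by
        intro a ha
        rw [Multiset.mem_toFinset] at ha
        rw [mem_Icc]
        exact ⟨hpos a ha, le_trans (Finset.le_sup (f := id) (Multiset.mem_toFinset.mpr ha)) (le_max_right _ _)⟩
      have hsumeq : (M.map fun a => 1/(n:ℝ)^a).sum
          = ∑ j ∈ Icc 1 B, (M.count j : ℝ) * (1/(n:ℝ)^j) := by
        rw [Finset.sum_multiset_map_count]
        rw [Finset.sum_subset hsubF (by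
          intro x hx hnx
          rw [Multiset.mem_toFinset] at hnx
          simp [Multiset.count_eq_zero_of_notMem hnx])]
        apply Finset.sum_congr rfl
        intro j _
        rw [nsmul_eq_mul]
      have hcardeq : ∑ j ∈ Icc 1 B, M.count j = M.card := by
        rw [← Finset.sum_subset hsubF (by
          intro x hx hnx
          rw [Multiset.mem_toFinset] at hnx
          simp [Multiset.count_eq_zero_of_notMem hnx])]
        exact Multiset.toFinset_sum_count_eq M
      rw [hsumeq]
      exact digit_bound n M.card B hn M.count (le_max_left _ _) hcall (le_of_eq hcardeq)


/-- Proposition 1: if `L` is a sequence of positive integers of length `s ≤ m` whose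
Kraft sum `σ_n(L) = Σ_i n^{-L i}` is `< 1`, then `σ_n(L) ≤ 1 - ς_{n,m}`. -/
theorem stmt13 (n m s : ℕ) (hn : 2 ≤ n) (hm : 1 ≤ m) (hs : s ≤ m)
    (L : Fin s → ℕ) (hL : ∀ i, 1 ≤ L i)
    (h : ∑ i, (1 : ℝ) / (n : ℝ) ^ L i < 1) :
    ∑ i, (1 : ℝ) / (n : ℝ) ^ L i ≤ 1 - varsigma n m := by
  have hσ : ∑ i, (1:ℝ)/(n:ℝ)^(L i) = ((Finset.univ.val.map L).map fun a => 1/(n:ℝ)^a).sum := by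
    rw [Multiset.map_map]
    rfl
  set M := (Finset.univ.val : Multiset (Fin s)).map L with hM
  have hcard : M.card = s := by simp [hM]
  have hposM : ∀ a ∈ M, 1 ≤ a := by
    intro a ha
    rw [hM, Multiset.mem_map] at ha
    obtain ⟨i, _, rfl⟩ := ha
    exact hL i
  have hmain := kraft_multiset n hn M.card M le_rfl hposM (by rw [← hσ]; exact h)
  rw [← hσ] at hmain
  refine hmain.trans ?_
  have hanti := varsigma_anti n hn (show M.card ≤ m by omega)
  linarith
end
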